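/- arXiv:2402.08435 — 8 statements merged into one kernel-verified Lean document; each statement's English description precedes it below -/
import Mathlib

section
/- For every i in ℤ, the weakly monotone operators satisfy the relation A_i A_i† + A_{i+1}† A_{i+1} = A_{i+1} A_{i+1}† as bounded operators on the weakly monotone Fock space. -/
open scoped ComplexOrder

/-- Index set for the orthonormal basis of the weakly monotone Fock space over `ℓ²(ℤ)`:
decreasing (finite) lists of integers; the empty list corresponds to the vacuum. -/
def WMIdx : Type := {l : List ℤ // l.Chain' (· ≥ ·)}

/-- `i` may be created on top of the tensor indexed by `l`. -/
def WMIdx.ok (i : ℤ) (l : WMIdx) : Prop := ∀ j ∈ l.1.head?, i ≥ j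

def WMIdx.cons (i : ℤ) (l : WMIdx) (h : WMIdx.ok i l) : WMIdx :=
  ⟨i :: l.1, List.isChain_cons.mpr ⟨h, l.2⟩⟩

def WMIdx.vac : WMIdx := ⟨[], List.isChain_nil⟩

section Aux

open scoped InnerProductSpace

variable {H : Type} [NormedAddCommGroup H] [InnerProductSpace ℂ H] [CompleteSpace H]
  (b : HilbertBasis WMIdx ℂ H) (C : ℤ → H →L[ℂ] H)
  (hC : ∀ i l (h : WMIdx.ok i l), C i (b l) = b (WMIdx.cons i l h))
  (hC0 : ∀ i l, ¬ WMIdx.ok i l → C i (b l) = 0)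

include hC hC0 in
lemma wm_adj_cons (i : ℤ) (m : WMIdx) (h : WMIdx.ok i m) :
    ContinuousLinearMap.adjoint (C i) (b (WMIdx.cons i m h)) = b m := by
  classical
  apply b.repr.injective
  ext n
  rw [b.repr_apply_apply, b.repr_apply_apply, ContinuousLinearMap.adjoint_inner_right]
  by_cases hn : WMIdx.ok i n
  · rw [hC i n hn, orthonormal_iff_ite.mp b.orthonormal, orthonormal_iff_ite.mp b.orthonormal]
    congr 1
    simp only [eq_iff_iff]
    constructor
    · intro he
      have : i :: n.1 = i :: m.1 := congrArg Subtype.val he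
      exact Subtype.ext (List.cons_injective this)
    · rintro rfl; rfl
  · rw [hC0 i n hn, inner_zero_left, orthonormal_iff_ite.mp b.orthonormal]
    rw [if_neg]
    rintro rfl; exact hn h

include hC hC0 in
lemma wm_adj_zero (i : ℤ) (l : WMIdx) (hl : l.1.head? ≠ some i) :
    ContinuousLinearMap.adjoint (C i) (b l) = 0 := by
  classical
  apply b.repr.injective
  ext n
  rw [b.repr_apply_apply, b.repr_apply_apply, ContinuousLinearMap.adjoint_inner_right,
    inner_zero_right]
  by_cases hn : WMIdx.ok i n
  · rw [hC i n hn, orthonormal_iff_ite.mp b.orthonormal, if_neg]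
    rintro rfl
    exact hl rfl
  · rw [hC0 i n hn, inner_zero_left]

end Aux

/-- `A_i A_i† + A_{i+1}† A_{i+1} = A_{i+1} A_{i+1}†`. -/
theorem wm_successor_relation {H : Type} [NormedAddCommGroup H] [InnerProductSpace ℂ H] [CompleteSpace H]
    (b : HilbertBasis WMIdx ℂ H) (C : ℤ → H →L[ℂ] H)
    (hC : ∀ i l (h : WMIdx.ok i l), C i (b l) = b (WMIdx.cons i l h))
    (hC0 : ∀ i l, ¬ WMIdx.ok i l → C i (b l) = 0)
    (i : ℤ) :
    (ContinuousLinearMap.adjoint (C i)).comp (C i)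
        + (C (i + 1)).comp (ContinuousLinearMap.adjoint (C (i + 1)))
      = (ContinuousLinearMap.adjoint (C (i + 1))).comp (C (i + 1)) := by
  apply ContinuousLinearMap.ext_on
    (Submodule.dense_iff_topologicalClosure_eq_top.mpr b.dense_span)
  rintro x ⟨l, rfl⟩
  simp only [ContinuousLinearMap.add_apply, ContinuousLinearMap.comp_apply]
  rcases hl : l.1 with _ | ⟨j, t⟩
  · -- vacuum
    have hok : WMIdx.ok i l := by intro j hj; rw [hl] at hj; simp at hj
    have hok' : WMIdx.ok (i+1) l := by intro j hj; rw [hl] at hj; simp at hj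
    rw [hC i l hok, wm_adj_cons b C hC hC0 i l hok,
      wm_adj_zero b C hC hC0 (i+1) l (by rw [hl]; simp), map_zero,
      hC (i+1) l hok', wm_adj_cons b C hC hC0 (i+1) l hok', add_zero]
  · have hhead : l.1.head? = some j := by rw [hl]; rfl
    rcases lt_trichotomy j (i+1) with hj | hj | hj
    · -- j ≤ i
      have hji : j ≤ i := by omega
      have hok : WMIdx.ok i l := by
        intro k hk; rw [hhead] at hk; simp at hk; omega
      have hok' : WMIdx.ok (i+1) l := by
        intro k hk; rw [hhead] at hk; simp at hk; omega
      rw [hC i l hok, wm_adj_cons b C hC hC0 i l hok,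
        wm_adj_zero b C hC hC0 (i+1) l (by rw [hhead]; intro h; injection h; omega),
        map_zero, hC (i+1) l hok', wm_adj_cons b C hC hC0 (i+1) l hok', add_zero]
    · -- j = i+1
      subst hj
      have hok' : WMIdx.ok (i+1) l := by
        intro k hk; rw [hhead] at hk; simp at hk; omega
      have hnok : ¬ WMIdx.ok i l := by
        intro h; have := h (i+1) (by rw [hhead]; rfl); omega
      set m : WMIdx := ⟨t, (hl ▸ l.2).tail⟩ with hm
      have hokm : WMIdx.ok (i+1) m := by
        intro k hk
        have := (List.isChain_cons.mp (hl ▸ l.2)).1 k hk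
        exact this
      have hlm : l = WMIdx.cons (i+1) m hokm := Subtype.ext (by rw [hl]; rfl)
      rw [hC0 i l hnok, map_zero, zero_add,
        hC (i+1) l hok', wm_adj_cons b C hC hC0 (i+1) l hok']
      conv_lhs => rw [hlm, wm_adj_cons b C hC hC0 (i+1) m hokm, hC (i+1) m hokm, ← hlm]
    · -- j > i+1
      have hnok : ¬ WMIdx.ok i l := by
        intro h; have := h j (by rw [hhead]; rfl); omega
      have hnok' : ¬ WMIdx.ok (i+1) l := by
        intro h; have := h j (by rw [hhead]; rfl); omega
      rw [hC0 i l hnok, map_zero, zero_add,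
        wm_adj_zero b C hC hC0 (i+1) l (by rw [hhead]; intro h; injection h; omega),
        map_zero, hC0 (i+1) l hnok', map_zero]
end

section
/- The closed two-sided ideal of the weakly monotone C*-algebra W generated by the set {A_i² : i ∈ ℤ} equals the whole algebra W. -/
set_option maxHeartbeats 1000000


open scoped ComplexOrder

lemma WMIdx.ok_cons (i : ℤ) (l : WMIdx) (h : WMIdx.ok i l) :
    WMIdx.ok i (WMIdx.cons i l h) := by
  intro j hj
  simp [WMIdx.cons] at hj
  omega

lemma wm_adj_cons_s5 {H : Type} [NormedAddCommGroup H] [InnerProductSpace ℂ H] [CompleteSpace H]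
    (b : HilbertBasis WMIdx ℂ H) (C : ℤ → H →L[ℂ] H)
    (hC : ∀ i l (h : WMIdx.ok i l), C i (b l) = b (WMIdx.cons i l h))
    (hC0 : ∀ i l, ¬ WMIdx.ok i l → C i (b l) = 0)
    (i : ℤ) (l : WMIdx) (h : WMIdx.ok i l) :
    ContinuousLinearMap.adjoint (C i) (b (WMIdx.cons i l h)) = b l := by
  classical
  apply b.repr.injective
  have horth := orthonormal_iff_ite.mp b.orthonormal
  ext m
  rw [b.repr_apply_apply, b.repr_apply_apply, ContinuousLinearMap.adjoint_inner_right]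
  by_cases hm : WMIdx.ok i m
  · rw [hC i m hm, horth, horth]
    by_cases hml : m = l
    · subst hml
      rw [if_pos rfl, if_pos rfl]
    · rw [if_neg hml, if_neg (fun e => hml ?_)]
      have e' : i :: m.1 = i :: l.1 := congrArg Subtype.val e
      exact Subtype.ext (by simpa using e')
  · have hne : ¬ (m = l) := fun e => hm (by rw [e]; exact h)
    rw [hC0 i m hm, horth, if_neg hne]
    exact inner_zero_left _

lemma wm_key {H : Type} [NormedAddCommGroup H] [InnerProductSpace ℂ H] [CompleteSpace H]
    (b : HilbertBasis WMIdx ℂ H) (C : ℤ → H →L[ℂ] H)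
    (hC : ∀ i l (h : WMIdx.ok i l), C i (b l) = b (WMIdx.cons i l h))
    (hC0 : ∀ i l, ¬ WMIdx.ok i l → C i (b l) = 0)
    (i : ℤ) :
    ContinuousLinearMap.adjoint (C i) * (C i * C i) = C i := by
  have hd : Dense ((Submodule.span ℂ (Set.range b) : Submodule ℂ H) : Set H) :=
    Submodule.dense_iff_topologicalClosure_eq_top.mpr b.dense_span
  refine ContinuousLinearMap.ext_on hd ?_
  rintro _ ⟨l, rfl⟩
  simp only [ContinuousLinearMap.mul_apply]
  by_cases hl : WMIdx.ok i l
  · rw [hC i l hl, hC i _ (WMIdx.ok_cons i l hl),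
      wm_adj_cons_s5 b C hC hC0 i (WMIdx.cons i l hl) (WMIdx.ok_cons i l hl)]
  · rw [hC0 i l hl]
    simp

/-- the closed two-sided ideal of the weakly monotone C*-algebra `W`
(the norm closure of the *-algebra generated by the annihilators `A_i = (C i)^*`)
generated by `{A_i² : i ∈ ℤ}` is all of `W`: every closed two-sided ideal of `W`
containing all the `A_i²` is the whole algebra. -/
theorem wm_ideal_of_squares_is_everything {H : Type} [NormedAddCommGroup H] [InnerProductSpace ℂ H] [CompleteSpace H]
    (b : HilbertBasis WMIdx ℂ H) (C : ℤ → H →L[ℂ] H)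
    (hC : ∀ i l (h : WMIdx.ok i l), C i (b l) = b (WMIdx.cons i l h))
    (hC0 : ∀ i l, ¬ WMIdx.ok i l → C i (b l) = 0)
    (W : NonUnitalStarSubalgebra ℂ (H →L[ℂ] H))
    (hW : W = (NonUnitalStarAlgebra.adjoin ℂ
        (Set.range fun i : ℤ => ContinuousLinearMap.adjoint (C i))).topologicalClosure)
    (I : TwoSidedIdeal W)
    (hIclosed : IsClosed {x : W | x ∈ I})
    (hsq : ∀ (i : ℤ)
      (h : (ContinuousLinearMap.adjoint (C i) * ContinuousLinearMap.adjoint (C i) :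
          H →L[ℂ] H) ∈ W),
      (⟨_, h⟩ : W) ∈ I) :
    ∀ x : W, x ∈ I := by
  classical
  set A : ℤ → H →L[ℂ] H := fun i => ContinuousLinearMap.adjoint (C i) with hA
  -- star of the generators
  have hstarA : ∀ i, star (A i) = C i := by
    intro i
    rw [hA, ContinuousLinearMap.star_eq_adjoint, ContinuousLinearMap.adjoint_adjoint]
  -- the two key operator identities
  have e2 : ∀ i, (A i * star (A i)) * star (A i) = star (A i) := by
    intro i
    rw [hstarA, hA, mul_assoc]
    exact wm_key b C hC hC0 i
  have e1 : ∀ i, (A i * A i) * star (A i) = A i := by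
    intro i
    have := congrArg star (wm_key b C hC hC0 i)
    rw [star_mul, star_mul] at this
    rw [hstarA]
    calc (A i * A i) * C i = star (C i) * star (C i) * star (ContinuousLinearMap.adjoint (C i)) := by
          rw [hA, ContinuousLinearMap.star_eq_adjoint, ContinuousLinearMap.star_eq_adjoint,
            ContinuousLinearMap.adjoint_adjoint]
      _ = star (C i) := this
      _ = A i := by rw [ContinuousLinearMap.star_eq_adjoint, hA]
  -- membership of generators in W
  have hAW : ∀ i, A i ∈ W := by
    intro i
    rw [hW]
    exact NonUnitalStarSubalgebra.le_topologicalClosure _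
      (NonUnitalStarAlgebra.subset_adjoin ℂ _ ⟨i, rfl⟩)
  set a : ℤ → W := fun i => ⟨A i, hAW i⟩ with ha
  -- identities in W
  have e1W : ∀ i, (a i * a i) * star (a i) = a i := fun i => Subtype.ext (e1 i)
  have e2W : ∀ i, (a i * star (a i)) * star (a i) = star (a i) := fun i => Subtype.ext (e2 i)
  -- memberships in I
  have hsqI : ∀ i, a i * a i ∈ I := by
    intro i
    exact hsq i ((a i * a i).2)
  have haI : ∀ i, a i ∈ I := by
    intro i
    have := I.mul_mem_right _ (star (a i)) (hsqI i)
    rwa [e1W i] at this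
  have hstarI : ∀ i, star (a i) ∈ I := by
    intro i
    have := I.mul_mem_right _ (star (a i)) (I.mul_mem_right _ (star (a i)) (haI i))
    rwa [e2W i] at this
  have hsmulI : ∀ i (c : ℂ), c • a i ∈ I := by
    intro i c
    have : c • a i = (c • (a i * a i)) * star (a i) := by
      rw [smul_mul_assoc, e1W i]
    rw [this]
    exact I.mul_mem_left _ _ (hstarI i)
  have hsmulstarI : ∀ i (c : ℂ), c • star (a i) ∈ I := by
    intro i c
    have : c • star (a i) = (c • (a i * star (a i))) * star (a i) := by
      rw [smul_mul_assoc, e2W i]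
    rw [this]
    exact I.mul_mem_left _ _ (hstarI i)
  -- set of generators
  set S : Set (H →L[ℂ] H) := Set.range fun i : ℤ => ContinuousLinearMap.adjoint (C i) with hS
  -- the adjoin is inside W
  have hsub : ∀ z, z ∈ NonUnitalStarAlgebra.adjoin ℂ S → z ∈ W := by
    intro z hz
    rw [hW]
    exact NonUnitalStarSubalgebra.le_topologicalClosure _ hz
  have hsub' : ∀ z, z ∈ NonUnitalAlgebra.adjoin ℂ (S ∪ star S) → z ∈ W := by
    intro z hz
    apply hsub
    have h2 : z ∈ (NonUnitalStarAlgebra.adjoin ℂ S).toNonUnitalSubalgebra := by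
      rw [NonUnitalStarAlgebra.adjoin_toNonUnitalSubalgebra]
      exact hz
    exact h2
  -- main induction
  have hincl : ∀ z (hz : z ∈ NonUnitalStarAlgebra.adjoin ℂ S) (hzW : z ∈ W),
      (⟨z, hzW⟩ : W) ∈ I ∧ ∀ (c : ℂ) (hc : c • z ∈ W), (⟨c • z, hc⟩ : W) ∈ I := by
    intro z hz
    have hz' : z ∈ NonUnitalAlgebra.adjoin ℂ (S ∪ star S) := by
      rw [← NonUnitalStarAlgebra.adjoin_toNonUnitalSubalgebra]
      exact hz
    clear hz
    induction hz' using NonUnitalAlgebra.adjoin_induction with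
    | mem x hx =>
      intro hzW
      rcases hx with hx | hx
      · obtain ⟨i, rfl⟩ := hx
        exact ⟨haI i, fun c hc => hsmulI i c⟩
      · rw [Set.mem_star] at hx
        obtain ⟨i, hi⟩ := hx
        have hxe : x = star (A i) := by
          have h2 := congrArg star hi
          rw [star_star] at h2
          exact h2.symm
        subst hxe
        exact ⟨hstarI i, fun c hc => hsmulstarI i c⟩
    | add x y hx hy px py =>
      intro hzW
      have hxW := hsub' x hx
      have hyW := hsub' y hy
      constructor
      · have : (⟨x + y, hzW⟩ : W) = ⟨x, hxW⟩ + ⟨y, hyW⟩ := Subtype.ext rfl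
        rw [this]
        exact I.add_mem (px hxW).1 (py hyW).1
      · intro c hc
        have : (⟨c • (x + y), hc⟩ : W)
            = ⟨c • x, SMulMemClass.smul_mem c hxW⟩ + ⟨c • y, SMulMemClass.smul_mem c hyW⟩ :=
          Subtype.ext (smul_add c x y)
        rw [this]
        exact I.add_mem ((px hxW).2 c _) ((py hyW).2 c _)
    | zero =>
      intro hzW
      constructor
      · have : (⟨(0 : H →L[ℂ] H), hzW⟩ : W) = 0 := Subtype.ext rfl
        rw [this]; exact I.zero_mem
      · intro c hc
        have : (⟨c • (0 : H →L[ℂ] H), hc⟩ : W) = 0 := Subtype.ext (smul_zero c)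
        rw [this]; exact I.zero_mem
    | mul x y hx hy px py =>
      intro hzW
      have hxW := hsub' x hx
      have hyW := hsub' y hy
      constructor
      · have : (⟨x * y, hzW⟩ : W) = ⟨x, hxW⟩ * ⟨y, hyW⟩ := Subtype.ext rfl
        rw [this]
        exact I.mul_mem_left _ _ (py hyW).1
      · intro c hc
        have : (⟨c • (x * y), hc⟩ : W)
            = (⟨x, hxW⟩ : W) * ⟨c • y, SMulMemClass.smul_mem c hyW⟩ :=
          Subtype.ext (mul_smul_comm c x y).symm
        rw [this]
        exact I.mul_mem_left _ _ ((py hyW).2 c _)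
    | smul r x hx px =>
      intro hzW
      have hxW := hsub' x hx
      constructor
      · exact (px hxW).2 r hzW
      · intro c hc
        have : (⟨c • r • x, hc⟩ : W) = ⟨(c * r) • x, SMulMemClass.smul_mem (c * r) hxW⟩ :=
          Subtype.ext (smul_smul c r x)
        rw [this]
        exact (px hxW).2 (c * r) _
  -- now pass to the closure
  intro x
  obtain ⟨xv, hxW⟩ := x
  have hWclosed : IsClosed (W : Set (H →L[ℂ] H)) := by
    rw [hW]
    exact NonUnitalStarSubalgebra.isClosed_topologicalClosure _
  set T : Set (H →L[ℂ] H) := Subtype.val '' {m : W | m ∈ I} with hT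
  have hTclosed : IsClosed T :=
    (hWclosed.isClosedEmbedding_subtypeVal).isClosedMap _ hIclosed
  have hsubT : ((NonUnitalStarAlgebra.adjoin ℂ S : NonUnitalStarSubalgebra ℂ (H →L[ℂ] H)) : Set (H →L[ℂ] H)) ⊆ T := by
    intro z hz
    exact ⟨⟨z, hsub z hz⟩, (hincl z hz (hsub z hz)).1, rfl⟩
  have hxc : xv ∈ closure ((NonUnitalStarAlgebra.adjoin ℂ S : NonUnitalStarSubalgebra ℂ (H →L[ℂ] H)) : Set (H →L[ℂ] H)) := by
    have := hxW
    rw [hW] at this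
    exact this
  have hxT : xv ∈ T := closure_minimal hsubT hTclosed hxc
  obtain ⟨m, hmI, hmv⟩ := hxT
  have : (⟨xv, hxW⟩ : W) = m := Subtype.ext hmv.symm
  rw [this]
  exact hmI
end

section
/- The orthogonal projection P_Ω onto the vacuum vector Ω does not belong to the weakly monotone C*-algebra W (the norm closure of the *-algebra generated by the annihilators A_i, i ∈ ℤ, on the weakly monotone Fock space over ℓ²(ℤ)). -/
open scoped ComplexOrder

namespace WMaux

open ContinuousLinearMap

noncomputable section

/-- `l` may be extended by `j` at the bottom. -/
def valid (j : ℤ) (l : WMIdx) : Prop := ∀ k ∈ l.1.getLast?, j ≤ k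

lemma chain_append {j : ℤ} {l : WMIdx} (h : valid j l) : (l.1 ++ [j]).Chain' (· ≥ ·) :=
  List.isChain_append.2 ⟨l.2, List.isChain_singleton j, by
    intro x hx y hy
    simp only [List.head?_cons, Option.mem_some_iff] at hy
    subst hy
    exact h x hx⟩

open Classical in
/-- Append `j` at the bottom when possible, else do nothing. -/
def sig (j : ℤ) (l : WMIdx) : WMIdx :=
  if h : valid j l then ⟨l.1 ++ [j], chain_append h⟩ else l

lemma sig_valid {j : ℤ} {l : WMIdx} (h : valid j l) : (sig j l).1 = l.1 ++ [j] := by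
  simp [sig, h]

lemma sig_invalid {j : ℤ} {l : WMIdx} (h : ¬ valid j l) : sig j l = l := by
  simp [sig, h]

lemma valid_nil {j : ℤ} {l : WMIdx} (h : l.1 = []) : valid j l := by
  intro k hk
  rw [h] at hk
  simp at hk

lemma not_valid_iff {j : ℤ} {l : WMIdx} : ¬ valid j l ↔ ∃ k ∈ l.1.getLast?, k < j := by
  unfold valid
  push_neg
  rfl

lemma sig_injective (j : ℤ) : Function.Injective (sig j) := by
  intro a c h
  by_cases ha : valid j a <;> by_cases hc : valid j c
  · have : a.1 ++ [j] = c.1 ++ [j] := by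
      rw [← sig_valid ha, ← sig_valid hc, h]
    exact Subtype.ext (by simpa using this)
  · exfalso
    obtain ⟨k, hk, hkj⟩ := not_valid_iff.1 hc
    rw [sig_invalid hc] at h
    have : c.1.getLast? = some j := by
      rw [← h, sig_valid ha, List.getLast?_concat]
    rw [this] at hk
    simp only [Option.mem_some_iff] at hk
    omega
  · exfalso
    obtain ⟨k, hk, hkj⟩ := not_valid_iff.1 ha
    rw [sig_invalid ha] at h
    have : a.1.getLast? = some j := by
      rw [h, sig_valid hc, List.getLast?_concat]
    rw [this] at hk
    simp only [Option.mem_some_iff] at hk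
    omega
  · rwa [sig_invalid ha, sig_invalid hc] at h

variable {H : Type} [NormedAddCommGroup H] [InnerProductSpace ℂ H] [CompleteSpace H]

/-- The isometric "append `j` at the bottom" operator. -/
def U (b : HilbertBasis WMIdx ℂ H) (j : ℤ) : H →ₗᵢ[ℂ] H :=
  ((b.orthonormal.comp (sig j) (sig_injective j)).orthogonalFamily.linearIsometry).comp
    b.repr.toLinearIsometry

lemma U_apply (b : HilbertBasis WMIdx ℂ H) (j : ℤ) (l : WMIdx) :
    U b j (b l) = b (sig j l) := by
  classical
  rw [U, LinearIsometry.coe_comp, Function.comp_apply, LinearIsometryEquiv.coe_toLinearIsometry,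
    ← b.repr_symm_single, LinearIsometryEquiv.apply_symm_apply,
    OrthogonalFamily.linearIsometry_apply_single, LinearIsometry.toSpanSingleton_apply,
    one_smul, Function.comp_apply]

lemma binner (b : HilbertBasis WMIdx ℂ H) (l m : WMIdx) [Decidable (l = m)] :
    (inner ℂ (b l) (b m) : ℂ) = if l = m then 1 else 0 := by
  classical
  have h := orthonormal_iff_ite.1 b.orthonormal l m
  convert h

lemma ext_basis (b : HilbertBasis WMIdx ℂ H) {x y : H}
    (h : ∀ m, (inner ℂ (b m) x : ℂ) = inner ℂ (b m) y) : x = y := by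
  have : b.repr x = b.repr y := by
    ext m
    rw [b.repr_apply_apply, b.repr_apply_apply, h]
  exact b.repr.injective this

lemma op_ext (b : HilbertBasis WMIdx ℂ H) {S T : H →L[ℂ] H}
    (h : ∀ l, S (b l) = T (b l)) : S = T := by
  refine ContinuousLinearMap.ext_on (?_ : Dense ((Submodule.span ℂ (Set.range b)) : Set H)) ?_
  · exact Submodule.dense_iff_topologicalClosure_eq_top.2 b.dense_span
  · rintro x ⟨l, rfl⟩
    exact h l


lemma exists_tail {l : WMIdx} {i : ℤ} {t : List ℤ} (e : l.1 = i :: t) :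
    ∃ (t' : WMIdx) (h : WMIdx.ok i t'), l = WMIdx.cons i t' h := by
  have hc := l.2
  rw [e] at hc
  replace hc := List.isChain_cons.mp hc
  exact ⟨⟨t, hc.2⟩, hc.1, Subtype.ext e⟩

lemma getLast?_cons_of_ne {a : ℤ} {t : List ℤ} (ht : t ≠ []) :
    (a :: t).getLast? = t.getLast? := by
  cases t with
  | nil => exact absurd rfl ht
  | cons c u => rw [List.getLast?_cons_cons]

lemma head?_sig {j : ℤ} {l : WMIdx} (hl : l.1 ≠ []) : (sig j l).1.head? = l.1.head? := by
  by_cases h : valid j l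
  · rw [sig_valid h]
    cases e : l.1 with
    | nil => exact absurd e hl
    | cons a t => simp [e]
  · rw [sig_invalid h]

lemma ok_sig_iff {i j : ℤ} (hij : j ≤ i) (l : WMIdx) :
    WMIdx.ok i (sig j l) ↔ WMIdx.ok i l := by
  by_cases hl : l.1 = []
  · constructor
    · intro _ k hk
      rw [hl] at hk
      simp at hk
    · intro _ k hk
      rw [sig_valid (valid_nil hl), hl] at hk
      simp only [List.nil_append, List.head?_cons, Option.mem_some_iff] at hk
      subst hk
      exact hij
  · unfold WMIdx.ok
    rw [head?_sig hl]

lemma valid_cons_iff {i j : ℤ} (hij : j ≤ i) (l : WMIdx) (h : WMIdx.ok i l) :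
    valid j (WMIdx.cons i l h) ↔ valid j l := by
  cases e : l.1 with
  | nil =>
    constructor
    · intro _
      exact valid_nil e
    · intro _ k hk
      have : (WMIdx.cons i l h).1 = [i] := by
        show i :: l.1 = [i]
        rw [e]
      rw [this] at hk
      simp only [List.getLast?_singleton, Option.mem_some_iff] at hk
      subst hk
      exact hij
  | cons a t =>
    have : (WMIdx.cons i l h).1.getLast? = l.1.getLast? := by
      show (i :: l.1).getLast? = l.1.getLast?
      exact getLast?_cons_of_ne (by rw [e]; simp)
    unfold valid
    rw [this]

lemma sig_cons {i j : ℤ} (hij : j ≤ i) (t : WMIdx) (h : WMIdx.ok i t) (hv : valid j t) :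
    sig j (WMIdx.cons i t h) = WMIdx.cons i (sig j t) ((ok_sig_iff hij t).2 h) := by
  apply Subtype.ext
  show (sig j (WMIdx.cons i t h)).1 = i :: (sig j t).1
  rw [sig_valid ((valid_cons_iff hij t h).2 hv), sig_valid hv]
  show (i :: t.1) ++ [j] = i :: (t.1 ++ [j])
  simp

section
variable (b : HilbertBasis WMIdx ℂ H) (C : ℤ → H →L[ℂ] H)
  (hC : ∀ i l (h : WMIdx.ok i l), C i (b l) = b (WMIdx.cons i l h))
  (hC0 : ∀ i l, ¬ WMIdx.ok i l → C i (b l) = 0)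
include hC hC0

lemma adj_cons (i : ℤ) (t : WMIdx) (h : WMIdx.ok i t) :
    ContinuousLinearMap.adjoint (C i) (b (WMIdx.cons i t h)) = b t := by
  classical
  apply ext_basis b
  intro m
  rw [ContinuousLinearMap.adjoint_inner_right]
  by_cases hm : WMIdx.ok i m
  · rw [hC i m hm, binner, binner]
    by_cases hmt : m = t
    · subst hmt
      simp
    · rw [if_neg hmt, if_neg]
      intro e
      have := congrArg Subtype.val e
      simp only [WMIdx.cons, List.cons.injEq, true_and] at this
      exact hmt (Subtype.ext this)
  · rw [hC0 i m hm, inner_zero_left, binner, if_neg]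
    intro e
    subst e
    exact hm h

lemma adj_nothead (i : ℤ) (l : WMIdx) (hl : l.1.head? ≠ some i) :
    ContinuousLinearMap.adjoint (C i) (b l) = 0 := by
  classical
  apply ext_basis b
  intro m
  rw [ContinuousLinearMap.adjoint_inner_right, inner_zero_right]
  by_cases hm : WMIdx.ok i m
  · rw [hC i m hm, binner, if_neg]
    intro e
    exact hl (by rw [← e]; rfl)
  · rw [hC0 i m hm, inner_zero_left]

lemma commC_basis {i j : ℤ} (hij : j < i) (l : WMIdx) :
    C i (b (sig j l)) = U b j (C i (b l)) := by
  classical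
  by_cases hok : WMIdx.ok i l
  · rw [hC i l hok, U_apply]
    by_cases hv : valid j l
    · rw [hC i (sig j l) ((ok_sig_iff hij.le l).2 hok), sig_cons hij.le l hok hv]
    · rw [sig_invalid hv, sig_invalid (fun hv' => hv ((valid_cons_iff hij.le l hok).1 hv')),
        hC i l hok]
  · rw [hC0 i l hok, hC0 i (sig j l) (fun h => hok ((ok_sig_iff hij.le l).1 h)), map_zero]

lemma commA_basis {i j : ℤ} (hij : j < i) (l : WMIdx) :
    ContinuousLinearMap.adjoint (C i) (b (sig j l)) =
      U b j (ContinuousLinearMap.adjoint (C i) (b l)) := by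
  classical
  cases e : l.1 with
  | nil =>
    rw [adj_nothead b C hC hC0 i (sig j l) ?h1, adj_nothead b C hC hC0 i l ?h2, map_zero]
    case h1 =>
      rw [sig_valid (valid_nil e), e]
      simp only [List.nil_append, List.head?_cons, ne_eq, Option.some.injEq]
      omega
    case h2 =>
      rw [e]
      simp
  | cons a t =>
    by_cases hai : a = i
    · subst hai
      obtain ⟨t', ht', rfl⟩ := exists_tail e
      rw [adj_cons b C hC hC0 a t' ht', U_apply]
      by_cases hv : valid j t'
      · rw [sig_cons hij.le t' ht' hv, adj_cons b C hC hC0]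
      · rw [sig_invalid (fun hv' => hv ((valid_cons_iff hij.le t' ht').1 hv')),
          adj_cons b C hC hC0, sig_invalid hv]
    · have h1 : l.1.head? = some a := by rw [e]; rfl
      rw [adj_nothead b C hC hC0 i l (by rw [h1]; simpa using hai),
        adj_nothead b C hC hC0 i (sig j l)
          (by rw [head?_sig (by rw [e]; simp), h1]; simpa using hai), map_zero]

lemma commC_op {i j : ℤ} (hij : j < i) :
    C i * (U b j).toContinuousLinearMap = (U b j).toContinuousLinearMap * C i := by
  apply op_ext b
  intro l
  rw [ContinuousLinearMap.mul_apply, ContinuousLinearMap.mul_apply,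
    LinearIsometry.coe_toContinuousLinearMap, U_apply]
  exact commC_basis b C hC hC0 hij l

lemma commA_op {i j : ℤ} (hij : j < i) :
    ContinuousLinearMap.adjoint (C i) * (U b j).toContinuousLinearMap
      = (U b j).toContinuousLinearMap * ContinuousLinearMap.adjoint (C i) := by
  apply op_ext b
  intro l
  rw [ContinuousLinearMap.mul_apply, ContinuousLinearMap.mul_apply,
    LinearIsometry.coe_toContinuousLinearMap, U_apply]
  exact commA_basis b C hC hC0 hij l

lemma key (Y : H →L[ℂ] H)
    (hY : Y ∈ NonUnitalStarAlgebra.adjoin ℂ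
      (Set.range fun i : ℤ => ContinuousLinearMap.adjoint (C i))) :
    ∃ N : ℤ, ∀ j < N,
      Y * (U b j).toContinuousLinearMap = (U b j).toContinuousLinearMap * Y ∧
      star Y * (U b j).toContinuousLinearMap = (U b j).toContinuousLinearMap * star Y := by
  induction hY using NonUnitalStarAlgebra.adjoin_induction with
  | mem x hx =>
    obtain ⟨i, rfl⟩ := hx
    refine ⟨i, fun j hj => ⟨commA_op b C hC hC0 hj, ?_⟩⟩
    rw [ContinuousLinearMap.star_eq_adjoint, ContinuousLinearMap.adjoint_adjoint]
    exact commC_op b C hC hC0 hj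
  | add x y hx hy ihx ihy =>
    obtain ⟨N₁, h₁⟩ := ihx
    obtain ⟨N₂, h₂⟩ := ihy
    refine ⟨min N₁ N₂, fun j hj => ?_⟩
    obtain ⟨a₁, a₂⟩ := h₁ j (lt_of_lt_of_le hj (min_le_left _ _))
    obtain ⟨c₁, c₂⟩ := h₂ j (lt_of_lt_of_le hj (min_le_right _ _))
    constructor
    · rw [add_mul, mul_add, a₁, c₁]
    · rw [star_add, add_mul, mul_add, a₂, c₂]
  | zero => exact ⟨0, fun j _ => by simp⟩
  | mul x y hx hy ihx ihy =>
    obtain ⟨N₁, h₁⟩ := ihx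
    obtain ⟨N₂, h₂⟩ := ihy
    refine ⟨min N₁ N₂, fun j hj => ?_⟩
    obtain ⟨a₁, a₂⟩ := h₁ j (lt_of_lt_of_le hj (min_le_left _ _))
    obtain ⟨c₁, c₂⟩ := h₂ j (lt_of_lt_of_le hj (min_le_right _ _))
    constructor
    · rw [mul_assoc, c₁, ← mul_assoc, a₁, mul_assoc]
    · rw [star_mul, mul_assoc, a₂, ← mul_assoc, c₂, mul_assoc]
  | smul c x hx ihx =>
    obtain ⟨N, h⟩ := ihx
    refine ⟨N, fun j hj => ?_⟩
    obtain ⟨a₁, a₂⟩ := h j hj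
    constructor
    · rw [smul_mul_assoc, mul_smul_comm, a₁]
    · rw [star_smul, smul_mul_assoc, mul_smul_comm, a₂]
  | star x hx ihx =>
    obtain ⟨N, h⟩ := ihx
    refine ⟨N, fun j hj => ?_⟩
    obtain ⟨a₁, a₂⟩ := h j hj
    exact ⟨a₂, by rwa [star_star]⟩

end
end
end WMaux

/-- the rank-one projection `P_Ω` onto the vacuum does not belong to the
weakly monotone C*-algebra `W`, the norm closure of the *-algebra generated by the
annihilators `A_i = (C i)^*`. -/
theorem wm_vacuum_projection_not_in_algebra {H : Type} [NormedAddCommGroup H] [InnerProductSpace ℂ H] [CompleteSpace H]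
    (b : HilbertBasis WMIdx ℂ H) (C : ℤ → H →L[ℂ] H)
    (hC : ∀ i l (h : WMIdx.ok i l), C i (b l) = b (WMIdx.cons i l h))
    (hC0 : ∀ i l, ¬ WMIdx.ok i l → C i (b l) = 0) :
    ((innerSL ℂ (b WMIdx.vac)).smulRight (b WMIdx.vac) : H →L[ℂ] H) ∉
      (NonUnitalStarAlgebra.adjoin ℂ
        (Set.range fun i : ℤ => ContinuousLinearMap.adjoint (C i))).topologicalClosure := by
  classical
  intro hmem
  set P : H →L[ℂ] H := (innerSL ℂ (b WMIdx.vac)).smulRight (b WMIdx.vac) with hP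
  set Ω : H := b WMIdx.vac with hΩ
  -- `ξ j` is the basis vector `b ⟨[j]⟩ = U j Ω`.
  have hsv : ∀ j : ℤ, WMaux.sig j WMIdx.vac ≠ WMIdx.vac := by
    intro j h
    have := congrArg Subtype.val h
    rw [WMaux.sig_valid (WMaux.valid_nil rfl)] at this
    simp [WMIdx.vac] at this
  have hUΩ : ∀ j : ℤ, WMaux.U b j Ω = b (WMaux.sig j WMIdx.vac) := fun j => WMaux.U_apply b j _
  have hΩΩ : (inner ℂ Ω Ω : ℂ) = 1 := by
    rw [hΩ, WMaux.binner]
    simp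
  have hΩξ : ∀ j : ℤ, (inner ℂ Ω (b (WMaux.sig j WMIdx.vac)) : ℂ) = 0 := by
    intro j
    rw [hΩ, WMaux.binner, if_neg]
    exact fun h => hsv j h.symm
  have hPΩ : (inner ℂ Ω (P Ω) : ℂ) = 1 := by
    rw [hP, ContinuousLinearMap.smulRight_apply, innerSL_apply_apply, inner_smul_right, hΩΩ]
    simp
  have hPξ : ∀ j : ℤ, (inner ℂ (b (WMaux.sig j WMIdx.vac)) (P (b (WMaux.sig j WMIdx.vac))) : ℂ) = 0 := by
    intro j
    rw [hP, ContinuousLinearMap.smulRight_apply, innerSL_apply_apply, inner_smul_right, hΩξ j]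
    simp
  -- extract an approximant
  have hmem' : P ∈ closure ((NonUnitalStarAlgebra.adjoin ℂ
      (Set.range fun i : ℤ => ContinuousLinearMap.adjoint (C i)) : NonUnitalStarSubalgebra ℂ (H →L[ℂ] H)) : Set (H →L[ℂ] H)) := hmem
  obtain ⟨Y, hY, hdist⟩ := Metric.mem_closure_iff.1 hmem' (1/2) (by norm_num)
  obtain ⟨N, hN⟩ := WMaux.key b C hC hC0 Y hY
  set j : ℤ := N - 1 with hj
  have hjN : j < N := by omega
  obtain ⟨hcomm, -⟩ := hN j hjN
  set ξ : H := b (WMaux.sig j WMIdx.vac) with hξ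
  have hYξ : Y ξ = WMaux.U b j (Y Ω) := by
    have := congrArg (fun T : H →L[ℂ] H => T Ω) hcomm
    simp only [ContinuousLinearMap.mul_apply, LinearIsometry.coe_toContinuousLinearMap] at this
    rw [hξ, ← hUΩ j]
    exact this
  have hinner : (inner ℂ ξ (Y ξ) : ℂ) = inner ℂ Ω (Y Ω) := by
    rw [hYξ, hξ, ← hUΩ j]
    exact (WMaux.U b j).inner_map_map Ω (Y Ω)
  -- the quantitative contradiction
  set Z : H →L[ℂ] H := P - Y with hZ
  have e1 : (inner ℂ Ω (Z Ω) : ℂ) - inner ℂ ξ (Z ξ) = 1 := by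
    rw [hZ]
    simp only [ContinuousLinearMap.sub_apply, inner_sub_right]
    rw [hPΩ, hPξ j, hinner]
    ring
  have hnΩ : ‖Ω‖ = 1 := b.orthonormal.1 _
  have hnξ : ‖ξ‖ = 1 := b.orthonormal.1 _
  have b1 : ‖(inner ℂ Ω (Z Ω) : ℂ)‖ ≤ ‖Z‖ := by
    calc ‖(inner ℂ Ω (Z Ω) : ℂ)‖ ≤ ‖Ω‖ * ‖Z Ω‖ := norm_inner_le_norm _ _
    _ ≤ ‖Ω‖ * (‖Z‖ * ‖Ω‖) := by
        gcongr
        exact Z.le_opNorm Ω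
    _ = ‖Z‖ := by rw [hnΩ]; ring
  have b2 : ‖(inner ℂ ξ (Z ξ) : ℂ)‖ ≤ ‖Z‖ := by
    calc ‖(inner ℂ ξ (Z ξ) : ℂ)‖ ≤ ‖ξ‖ * ‖Z ξ‖ := norm_inner_le_norm _ _
    _ ≤ ‖ξ‖ * (‖Z‖ * ‖ξ‖) := by
        gcongr
        exact Z.le_opNorm ξ
    _ = ‖Z‖ := by rw [hnξ]; ring
  have hZn : ‖Z‖ < 1/2 := by
    rw [hZ, ← dist_eq_norm]
    exact hdist
  have : (1:ℝ) ≤ 2 * ‖Z‖ := by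
    calc (1:ℝ) = ‖(inner ℂ Ω (Z Ω) : ℂ) - inner ℂ ξ (Z ξ)‖ := by rw [e1]; simp
    _ ≤ ‖(inner ℂ Ω (Z Ω) : ℂ)‖ + ‖(inner ℂ ξ (Z ξ) : ℂ)‖ := norm_sub_le _ _
    _ ≤ 2 * ‖Z‖ := by linarith
  linarith
end

section
/- The Cesàro averages (1/n) Σ_{k=0}^{n−1} A_{−k} A_{−k}† converge to P_Ω in the strong operator topology but not in operator norm; in particular, for every n, ‖P_Ω − (1/n) Σ_{k=0}^{n−1} A_{−k} A_{−k}†‖ ≥ 1. -/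
open scoped ComplexOrder

/- Auxiliary material -/

noncomputable section

set_option linter.unusedSectionVars false

instance : DecidableEq WMIdx := fun a b =>
  decidable_of_iff (a.1 = b.1) Subtype.ext_iff.symm

instance (i : ℤ) (l : WMIdx) : Decidable (WMIdx.ok i l) := Classical.dec _

lemma WMIdx.cons_inj {i : ℤ} {l m : WMIdx} {h : WMIdx.ok i l} {h' : WMIdx.ok i m} :
    WMIdx.cons i l h = WMIdx.cons i m h' ↔ l = m := by
  constructor
  · intro e
    apply Subtype.ext
    have := congrArg Subtype.val e
    simpa [WMIdx.cons] using this
  · rintro rfl; rfl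

lemma WMIdx.ok_vac (i : ℤ) : WMIdx.ok i WMIdx.vac := by
  intro j hj
  simp [WMIdx.vac] at hj

variable {H : Type} [NormedAddCommGroup H] [InnerProductSpace ℂ H] [CompleteSpace H]
  (b : HilbertBasis WMIdx ℂ H) (C : ℤ → H →L[ℂ] H)

lemma wm_bb_inner (l m : WMIdx) :
    (inner ℂ (b l) (b m) : ℂ) = if l = m then 1 else 0 :=
  orthonormal_iff_ite.mp b.orthonormal l m

lemma wm_norm_b (l : WMIdx) : ‖b l‖ = 1 := b.orthonormal.1 l

lemma wm_ext_inner {x y : H} (h : ∀ m, (inner ℂ (b m) x : ℂ) = inner ℂ (b m) y) : x = y := by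
  apply b.repr.injective
  apply lp.ext
  funext m
  rw [b.repr_apply_apply, b.repr_apply_apply]
  exact h m

variable (hC : ∀ i l (h : WMIdx.ok i l), C i (b l) = b (WMIdx.cons i l h))
  (hC0 : ∀ i l, ¬ WMIdx.ok i l → C i (b l) = 0)

include hC hC0 in
lemma wm_inner_CC (i : ℤ) (m l : WMIdx) (hm : WMIdx.ok i m) :
    (inner ℂ (C i (b m)) (C i (b l)) : ℂ) = inner ℂ (b m) (b l) := by
  by_cases hl : WMIdx.ok i l
  · rw [hC i m hm, hC i l hl, wm_bb_inner, wm_bb_inner]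
    simp [WMIdx.cons_inj]
  · rw [hC0 i l hl, inner_zero_right, wm_bb_inner]
    have hne : m ≠ l := fun e => hl (e ▸ hm)
    simp [hne]

include hC hC0 in
lemma wm_coeff_T (i : ℤ) (m : WMIdx) (x : H) :
    (inner ℂ (b m) (((ContinuousLinearMap.adjoint (C i)).comp (C i)) x) : ℂ)
      = if WMIdx.ok i m then (inner ℂ (b m) x : ℂ) else 0 := by
  rw [ContinuousLinearMap.comp_apply, ContinuousLinearMap.adjoint_inner_right]
  by_cases hm : WMIdx.ok i m
  · rw [if_pos hm]
    have h1 := b.hasSum_repr x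
    have h2 := (h1.mapL (C i)).mapL (innerSL ℂ (C i (b m)))
    have h3 := h1.mapL (innerSL ℂ (b m))
    have he : (fun l => innerSL ℂ (C i (b m)) (C i ((b.repr x) l • b l)))
        = fun l => innerSL ℂ (b m) ((b.repr x) l • b l) := by
      funext l
      simp only [map_smul, innerSL_apply_apply, inner_smul_right]
      rw [wm_inner_CC b C hC hC0 i m l hm]
    rw [he] at h2
    have := h2.unique h3
    simpa using this
  · rw [if_neg hm, hC0 i m hm, inner_zero_left]

include hC hC0 in
lemma wm_T_fix (i : ℤ) (l : WMIdx) (h : WMIdx.ok i l) :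
    ((ContinuousLinearMap.adjoint (C i)).comp (C i)) (b l) = b l := by
  apply wm_ext_inner b
  intro m
  rw [wm_coeff_T b C hC hC0]
  by_cases hm : WMIdx.ok i m
  · rw [if_pos hm]
  · rw [if_neg hm, wm_bb_inner, if_neg (fun e => hm (by rw [e]; exact h))]

lemma wm_hasSum_normsq (x : H) :
    HasSum (fun m => ‖(inner ℂ (b m) x : ℂ)‖ ^ 2) (‖x‖ ^ 2) := by
  have h := b.hasSum_inner_mul_inner x x
  have he : (fun m => (inner ℂ x (b m) * inner ℂ (b m) x : ℂ))
      = fun m => ((‖(inner ℂ (b m) x : ℂ)‖ ^ 2 : ℝ) : ℂ) := by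
    funext m
    calc (inner ℂ x (b m) * inner ℂ (b m) x : ℂ)
        = (starRingEnd ℂ) (inner ℂ (b m) x : ℂ) * (inner ℂ (b m) x : ℂ) := by
          rw [inner_conj_symm]
      _ = ((‖(inner ℂ (b m) x : ℂ)‖ : ℂ)) ^ 2 := RCLike.conj_mul _
      _ = ((‖(inner ℂ (b m) x : ℂ)‖ ^ 2 : ℝ) : ℂ) := by push_cast; ring
  rw [he] at h
  have h2 := h.mapL Complex.reCLM
  simp only [Complex.reCLM_apply, Complex.ofReal_re] at h2
  have hxx : (inner ℂ x x : ℂ).re = ‖x‖ ^ 2 := by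
    rw [norm_sq_eq_re_inner (𝕜 := ℂ) x]
    rfl
  rwa [hxx] at h2

end

/-- the Cesàro averages `(1/n) Σ_{k=0}^{n-1} A_{-k} A_{-k}†` converge to
`P_Ω` strongly but not in norm: for every `n ≥ 1` the distance in norm is at least 1. -/
theorem wm_cesaro_averages_strong_not_norm {H : Type} [NormedAddCommGroup H] [InnerProductSpace ℂ H] [CompleteSpace H]
    (b : HilbertBasis WMIdx ℂ H) (C : ℤ → H →L[ℂ] H)
    (hC : ∀ i l (h : WMIdx.ok i l), C i (b l) = b (WMIdx.cons i l h))
    (hC0 : ∀ i l, ¬ WMIdx.ok i l → C i (b l) = 0)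
    (PΩ : H →L[ℂ] H) (hPΩ : PΩ = (innerSL ℂ (b WMIdx.vac)).smulRight (b WMIdx.vac)) :
    (∀ x : H, Filter.Tendsto
      (fun n : ℕ => (n : ℂ)⁻¹ • (∑ k ∈ Finset.range n,
        ((ContinuousLinearMap.adjoint (C (-(k : ℤ)))).comp (C (-(k : ℤ))))) x)
      Filter.atTop (nhds (PΩ x))) ∧
    (∀ n : ℕ, 1 ≤ n →
      1 ≤ ‖PΩ - (n : ℂ)⁻¹ • ∑ k ∈ Finset.range n,
        ((ContinuousLinearMap.adjoint (C (-(k : ℤ)))).comp (C (-(k : ℤ))))‖) := by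
  classical
  set T : ℕ → H →L[ℂ] H :=
    fun k => (ContinuousLinearMap.adjoint (C (-(k : ℤ)))).comp (C (-(k : ℤ))) with hT
  have hPapp : ∀ x : H, PΩ x = (inner ℂ (b WMIdx.vac) x : ℂ) • b WMIdx.vac := by
    intro x
    rw [hPΩ]
    simp [ContinuousLinearMap.smulRight_apply]
  -- strong convergence of T k x to PΩ x
  have key : ∀ x : H, Filter.Tendsto (fun k => T k x) Filter.atTop (nhds (PΩ x)) := by
    intro x
    rw [NormedAddCommGroup.tendsto_atTop]
    intro ε hε
    have hcompl := tendsto_tsum_compl_atTop_zero (fun m : WMIdx => ‖(inner ℂ (b m) x : ℂ)‖ ^ 2)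
    obtain ⟨F, hF⟩ :
        ∃ F : Finset WMIdx,
          (∑' m : {z : WMIdx // z ∉ F}, ‖(inner ℂ (b (m : WMIdx)) x : ℂ)‖ ^ 2) < ε ^ 2 :=
      ((tendsto_order.1 hcompl).2 _ (by positivity)).exists
    refine ⟨F.sup (fun m => m.1.head!.natAbs + 1), fun k hk => ?_⟩
    set y := T k x - PΩ x with hy
    have hcoeff : ∀ m, (inner ℂ (b m) y : ℂ)
        = if WMIdx.ok (-(k : ℤ)) m ∧ m ≠ WMIdx.vac then (inner ℂ (b m) x : ℂ) else 0 := by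
      intro m
      simp only [hy, hT, inner_sub_right]
      rw [wm_coeff_T b C hC hC0, hPapp, inner_smul_right, wm_bb_inner]
      by_cases hm : m = WMIdx.vac
      · subst hm
        simp [WMIdx.ok_vac]
      · simp only [if_neg hm, mul_zero, sub_zero]
        by_cases hok : WMIdx.ok (-(k : ℤ)) m
        · rw [if_pos hok, if_pos ⟨hok, hm⟩]
        · rw [if_neg hok, if_neg (fun h => hok h.1)]
    have hysum := wm_hasSum_normsq b y
    have hxsum := wm_hasSum_normsq b x
    have hsle : ∀ m, ‖(inner ℂ (b m) y : ℂ)‖ ^ 2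
        ≤ Set.indicator {z : WMIdx | z ∉ F} (fun m => ‖(inner ℂ (b m) x : ℂ)‖ ^ 2) m := by
      intro m
      by_cases hmF : m ∈ F
      · have hzero : (inner ℂ (b m) y : ℂ) = 0 := by
          rw [hcoeff m, if_neg]
          rintro ⟨hok, hvac⟩
          obtain ⟨h0, t, hlist⟩ : ∃ h0 t, m.1 = h0 :: t := by
            cases hm1 : m.1 with
            | nil => exact absurd (Subtype.ext hm1) hvac
            | cons a s => exact ⟨a, s, rfl⟩
          have hge : -(k : ℤ) ≥ h0 := hok h0 (by rw [hlist]; simp)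
          have hkN : m.1.head!.natAbs + 1 ≤ k :=
            le_trans (Finset.le_sup (f := fun m : WMIdx => m.1.head!.natAbs + 1) hmF) hk
          rw [hlist] at hkN
          simp only [List.head!] at hkN
          omega
        rw [hzero]
        simp only [norm_zero]
        have : (0:ℝ) ≤ Set.indicator {z : WMIdx | z ∉ F}
            (fun m => ‖(inner ℂ (b m) x : ℂ)‖ ^ 2) m :=
          Set.indicator_nonneg (fun a _ => by positivity) m
        simpa using this
      · rw [Set.indicator_of_mem (by simpa using hmF)]
        rw [hcoeff m]
        by_cases hcond : WMIdx.ok (-(k : ℤ)) m ∧ m ≠ WMIdx.vac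
        · rw [if_pos hcond]
        · rw [if_neg hcond, norm_zero]
          simpa using sq_nonneg ‖(inner ℂ (b m) x : ℂ)‖
    have hineq : ‖y‖ ^ 2
        ≤ ∑' m : {z : WMIdx // z ∉ F}, ‖(inner ℂ (b (m : WMIdx)) x : ℂ)‖ ^ 2 := by
      have h1 : ‖y‖ ^ 2 = ∑' m, ‖(inner ℂ (b m) y : ℂ)‖ ^ 2 := hysum.tsum_eq.symm
      have h2 : (∑' m : {z : WMIdx // z ∉ F}, ‖(inner ℂ (b (m : WMIdx)) x : ℂ)‖ ^ 2)
          = ∑' m, Set.indicator {z : WMIdx | z ∉ F}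
              (fun m => ‖(inner ℂ (b m) x : ℂ)‖ ^ 2) m := by
        exact tsum_subtype {z : WMIdx | z ∉ F} (fun m => ‖(inner ℂ (b m) x : ℂ)‖ ^ 2)
      rw [h1, h2]
      exact Summable.tsum_le_tsum hsle hysum.summable (hxsum.summable.indicator _)
    have hlt : ‖y‖ ^ 2 < ε ^ 2 := lt_of_le_of_lt hineq hF
    exact lt_of_pow_lt_pow_left₀ 2 hε.le hlt
  constructor
  · intro x
    have h := (key x).cesaro_smul
    have he : (fun n : ℕ => (n : ℂ)⁻¹ • (∑ k ∈ Finset.range n, T k) x)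
        = fun n : ℕ => (n : ℝ)⁻¹ • ∑ k ∈ Finset.range n, T k x := by
      funext n
      rw [ContinuousLinearMap.sum_apply]
      rw [show ((n : ℂ)⁻¹) = (((n : ℝ)⁻¹ : ℝ) : ℂ) by push_cast; ring]
      rw [Complex.coe_smul]
    rw [he]
    exact h
  · intro n hn
    set L : WMIdx := ⟨[1 - (n : ℤ)], List.isChain_singleton _⟩ with hL
    have hOk : ∀ k : ℕ, k < n → WMIdx.ok (-(k : ℤ)) L := by
      intro k hk j hj
      simp only [hL, List.head?] at hj
      rw [Option.mem_some_iff] at hj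
      subst hj
      have : (k : ℤ) < (n : ℤ) := by exact_mod_cast hk
      omega
    have hTfix : ∀ k ∈ Finset.range n, T k (b L) = b L := fun k hk =>
      wm_T_fix b C hC hC0 _ L (hOk k (Finset.mem_range.1 hk))
    have hvacL : WMIdx.vac ≠ L := by
      intro e
      have := congrArg Subtype.val e
      simp [WMIdx.vac, hL] at this
    have hPL : PΩ (b L) = 0 := by
      rw [hPapp, wm_bb_inner, if_neg hvacL, zero_smul]
    have hApply : (PΩ - (n : ℂ)⁻¹ • ∑ k ∈ Finset.range n, T k) (b L) = -(b L) := by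
      rw [ContinuousLinearMap.sub_apply, ContinuousLinearMap.smul_apply,
        ContinuousLinearMap.sum_apply, hPL, Finset.sum_congr rfl hTfix,
        Finset.sum_const, Finset.card_range, ← Nat.cast_smul_eq_nsmul ℂ, smul_smul,
        inv_mul_cancel₀ (by exact_mod_cast Nat.one_le_iff_ne_zero.mp hn : (n : ℂ) ≠ 0),
        one_smul, zero_sub]
    have hle := ContinuousLinearMap.le_opNorm
      (PΩ - (n : ℂ)⁻¹ • ∑ k ∈ Finset.range n, T k) (b L)
    rw [hApply, norm_neg, wm_norm_b, mul_one] at hle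
    exact hle
end

section
/- If η_1, …, η_n are vectors all lying in a common k-particle subspace (k ≥ 1) of the weakly monotone Fock space over ℓ²(ℤ), then ‖Σ_{j=1}^n A_j† η_j‖² = Σ_{j=1}^n ‖A_j† η_j‖² ≤ n · max_{1≤j≤n} ‖η_j‖². -/
open scoped ComplexOrder InnerProductSpace

-- auxiliary lemmas

lemma wm_orthonormal_norm_sum_sq {H : Type} [NormedAddCommGroup H] [InnerProductSpace ℂ H]
    {ι : Type*} {v : ι → H} (hv : Orthonormal ℂ v) (c : ι → ℂ) (s : Finset ι) :
    ‖∑ i ∈ s, c i • v i‖ ^ 2 = ∑ i ∈ s, ‖c i‖ ^ 2 := by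
  have h := hv.inner_sum c c s
  have h2 : RCLike.re ⟪∑ i ∈ s, c i • v i, ∑ i ∈ s, c i • v i⟫_ℂ
      = ‖∑ i ∈ s, c i • v i‖ ^ 2 := inner_self_eq_norm_sq _
  rw [h] at h2
  rw [← h2]
  rw [map_sum]
  refine Finset.sum_congr rfl fun i _ => ?_
  rw [RCLike.conj_mul]
  rw [← RCLike.ofReal_pow, RCLike.ofReal_re]

lemma wm_pairwise_orth_norm_sum_sq {H : Type} [NormedAddCommGroup H] [InnerProductSpace ℂ H]
    {n : ℕ} (v : Fin n → H) (hv : ∀ i j, i ≠ j → ⟪v i, v j⟫_ℂ = 0) :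
    ‖∑ j : Fin n, v j‖ ^ 2 = ∑ j : Fin n, ‖v j‖ ^ 2 := by
  have h : ⟪∑ i : Fin n, v i, ∑ j : Fin n, v j⟫_ℂ = ∑ i : Fin n, ⟪v i, v i⟫_ℂ := by
    rw [sum_inner]
    refine Finset.sum_congr rfl fun i _ => ?_
    rw [inner_sum]
    rw [Finset.sum_eq_single_of_mem i (Finset.mem_univ i)]
    intro j _ hj
    exact hv i j (Ne.symm hj)
  have h2 : RCLike.re ⟪∑ i : Fin n, v i, ∑ i : Fin n, v i⟫_ℂ
      = ‖∑ i : Fin n, v i‖ ^ 2 := inner_self_eq_norm_sq _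
  rw [h, map_sum] at h2
  rw [← h2]
  exact Finset.sum_congr rfl fun i _ => inner_self_eq_norm_sq _

lemma wm_contraction {H : Type} [NormedAddCommGroup H] [InnerProductSpace ℂ H] [CompleteSpace H]
    (b : HilbertBasis WMIdx ℂ H) (C : ℤ → H →L[ℂ] H)
    (hC : ∀ i l (h : WMIdx.ok i l), C i (b l) = b (WMIdx.cons i l h))
    (hC0 : ∀ i l, ¬ WMIdx.ok i l → C i (b l) = 0)
    (k : ℕ) (i : ℤ) {η : H}
    (hη : η ∈ (Submodule.span ℂ
      {v : H | ∃ l : WMIdx, l.1.length = k ∧ v = b l}).topologicalClosure) :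
    ‖C i η‖ ^ 2 ≤ ‖η‖ ^ 2 := by
  classical
  have hset : {v : H | ∃ l : WMIdx, l.1.length = k ∧ v = b l}
      = b '' {l : WMIdx | l.1.length = k} := by
    ext v
    constructor
    · rintro ⟨l, h1, rfl⟩; exact ⟨l, h1, rfl⟩
    · rintro ⟨l, h1, rfl⟩; exact ⟨l, h1, rfl⟩
  rw [hset] at hη
  have hη' : η ∈ closure ((Submodule.span ℂ (b '' {l : WMIdx | l.1.length = k}) : Submodule ℂ H)
      : Set H) := hη
  have hclosed : IsClosed {x : H | ‖C i x‖ ^ 2 ≤ ‖x‖ ^ 2} :=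
    isClosed_le (((C i).continuous.norm).pow 2) (continuous_norm.pow 2)
  refine closure_minimal ?_ hclosed hη'
  intro x hx
  obtain ⟨c, hc, rfl⟩ := (Finsupp.mem_span_image_iff_linearCombination ℂ).mp hx
  rw [Finsupp.linearCombination_apply, Finsupp.sum]
  set s := c.support with hs
  set g : WMIdx → WMIdx := fun l => if h : WMIdx.ok i l then WMIdx.cons i l h else l with hg
  set d : WMIdx → ℂ := fun m => c ⟨m.1.tail, m.2.tail⟩ with hd
  set t := s.filter (fun l => WMIdx.ok i l) with ht
  have hmap : (C i) (∑ l ∈ s, c l • b l) = ∑ l ∈ t, c l • (C i) (b l) := by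
    rw [map_sum]
    simp only [map_smul]
    rw [Finset.sum_filter_of_ne]
    intro l _ hne
    by_contra hbad
    exact hne (by rw [hC0 i l hbad, smul_zero])
  have hgl : ∀ l ∈ t, (C i) (b l) = b (g l) := by
    intro l hl
    have hok : WMIdx.ok i l := (Finset.mem_filter.mp hl).2
    rw [hC i l hok, hg]
    simp [hok]
  have hginj : ∀ l ∈ t, ∀ l' ∈ t, g l = g l' → l = l' := by
    intro l hl l' hl' heq
    have hok : WMIdx.ok i l := (Finset.mem_filter.mp hl).2
    have hok' : WMIdx.ok i l' := (Finset.mem_filter.mp hl').2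
    rw [hg] at heq
    simp only [dif_pos hok, dif_pos hok'] at heq
    have hval : i :: l.1 = i :: l'.1 := congrArg Subtype.val heq
    exact Subtype.ext (List.cons_injective hval)
  have hdg : ∀ l ∈ t, d (g l) = c l := by
    intro l hl
    have hok : WMIdx.ok i l := (Finset.mem_filter.mp hl).2
    rw [hg, hd]
    simp only [dif_pos hok]
    congr 1
  have key : (C i) (∑ l ∈ s, c l • b l) = ∑ m ∈ t.image g, d m • b m := by
    rw [hmap, Finset.sum_image hginj]
    refine Finset.sum_congr rfl fun l hl => ?_
    rw [hgl l hl, hdg l hl]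
  show ‖(C i) (∑ l ∈ s, c l • b l)‖ ^ 2 ≤ ‖∑ l ∈ s, c l • b l‖ ^ 2
  rw [key, wm_orthonormal_norm_sum_sq b.orthonormal, wm_orthonormal_norm_sum_sq b.orthonormal,
    Finset.sum_image hginj]
  calc ∑ l ∈ t, ‖d (g l)‖ ^ 2 = ∑ l ∈ t, ‖c l‖ ^ 2 :=
        Finset.sum_congr rfl fun l hl => by rw [hdg l hl]
    _ ≤ ∑ l ∈ s, ‖c l‖ ^ 2 :=
        Finset.sum_le_sum_of_subset_of_nonneg (Finset.filter_subset _ _)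
          (fun _ _ _ => by positivity)

lemma wm_orth {H : Type} [NormedAddCommGroup H] [InnerProductSpace ℂ H] [CompleteSpace H]
    (b : HilbertBasis WMIdx ℂ H) (C : ℤ → H →L[ℂ] H)
    (hC : ∀ i l (h : WMIdx.ok i l), C i (b l) = b (WMIdx.cons i l h))
    (hC0 : ∀ i l, ¬ WMIdx.ok i l → C i (b l) = 0)
    (k : ℕ) {i i' : ℤ} (hii : i ≠ i') {x y : H}
    (hx : x ∈ (Submodule.span ℂ
      {v : H | ∃ l : WMIdx, l.1.length = k ∧ v = b l}).topologicalClosure)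
    (hy : y ∈ (Submodule.span ℂ
      {v : H | ∃ l : WMIdx, l.1.length = k ∧ v = b l}).topologicalClosure) :
    ⟪C i x, C i' y⟫_ℂ = 0 := by
  classical
  have hgen : ∀ l l' : WMIdx, ⟪(C i) (b l), (C i') (b l')⟫_ℂ = 0 := by
    intro l l'
    by_cases h1 : WMIdx.ok i l
    · by_cases h2 : WMIdx.ok i' l'
      · rw [hC i l h1, hC i' l' h2]
        have hne : WMIdx.cons i l h1 ≠ WMIdx.cons i' l' h2 := by
          intro he
          exact hii (List.head_eq_of_cons_eq (congrArg Subtype.val he))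
        exact b.orthonormal.2 hne
      · rw [hC0 i' l' h2, inner_zero_right]
    · rw [hC0 i l h1, inner_zero_left]
  set S : Set H := {v : H | ∃ l : WMIdx, l.1.length = k ∧ v = b l} with hS
  set sp := Submodule.span ℂ S with hsp
  have hspan : ∀ x ∈ sp, ∀ y ∈ sp, ⟪(C i) x, (C i') y⟫_ℂ = 0 := by
    intro x hx y hy
    have hset : S = b '' {l : WMIdx | l.1.length = k} := by
      ext v
      constructor
      · rintro ⟨l, h1, rfl⟩; exact ⟨l, h1, rfl⟩
      · rintro ⟨l, h1, rfl⟩; exact ⟨l, h1, rfl⟩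
    rw [hsp, hset] at hx hy
    obtain ⟨c, hc, rfl⟩ := (Finsupp.mem_span_image_iff_linearCombination ℂ).mp hx
    obtain ⟨c', hc', rfl⟩ := (Finsupp.mem_span_image_iff_linearCombination ℂ).mp hy
    rw [Finsupp.linearCombination_apply, Finsupp.sum, Finsupp.linearCombination_apply,
      Finsupp.sum, map_sum, map_sum]
    simp only [map_smul, sum_inner, inner_sum, inner_smul_left, inner_smul_right, hgen,
      mul_zero, Finset.sum_const_zero]
  have hx' : x ∈ closure (sp : Set H) := hx
  have hy' : y ∈ closure (sp : Set H) := hy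
  have step1 : ∀ z ∈ closure (sp : Set H), ∀ w ∈ (sp : Set H), ⟪(C i) z, (C i') w⟫_ℂ = 0 := by
    intro z hz w hw
    refine closure_minimal (fun u hu => hspan u hu w hw)
      (isClosed_eq (Continuous.inner ((C i).continuous) continuous_const) continuous_const) hz
  refine closure_minimal (fun w hw => step1 x hx' w hw)
    (isClosed_eq (Continuous.inner continuous_const ((C i').continuous)) continuous_const) hy'

/-- if `η_1, …, η_n` all lie in a common `k`-particle subspace (`k ≥ 1`),
then `‖Σ_j A_j† η_j‖² = Σ_j ‖A_j† η_j‖² ≤ n · max_j ‖η_j‖²` (creators with indices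
`1, …, n`). -/
theorem wm_orthogonality_estimate {H : Type} [NormedAddCommGroup H] [InnerProductSpace ℂ H] [CompleteSpace H]
    (b : HilbertBasis WMIdx ℂ H) (C : ℤ → H →L[ℂ] H)
    (hC : ∀ i l (h : WMIdx.ok i l), C i (b l) = b (WMIdx.cons i l h))
    (hC0 : ∀ i l, ¬ WMIdx.ok i l → C i (b l) = 0)
    (k : ℕ) (hk : 1 ≤ k) (n : ℕ) (η : Fin n → H)
    (hη : ∀ j, η j ∈ (Submodule.span ℂ
      {v : H | ∃ l : WMIdx, l.1.length = k ∧ v = b l}).topologicalClosure) :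
    ‖∑ j : Fin n, C ((j : ℤ) + 1) (η j)‖ ^ 2
        = ∑ j : Fin n, ‖C ((j : ℤ) + 1) (η j)‖ ^ 2 ∧
      ‖∑ j : Fin n, C ((j : ℤ) + 1) (η j)‖ ^ 2 ≤ n * ⨆ j : Fin n, ‖η j‖ ^ 2 := by
  have horth : ∀ j j' : Fin n, j ≠ j' →
      ⟪C ((j : ℤ) + 1) (η j), C ((j' : ℤ) + 1) (η j')⟫_ℂ = 0 := by
    intro j j' hjj
    refine wm_orth b C hC hC0 k ?_ (hη j) (hη j')
    intro hcast
    apply hjj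
    have : ((j : ℕ) : ℤ) = ((j' : ℕ) : ℤ) := by linarith
    exact Fin.ext (Int.natCast_inj.mp this)
  have heq := wm_pairwise_orth_norm_sum_sq (fun j : Fin n => C ((j : ℤ) + 1) (η j)) horth
  refine ⟨heq, ?_⟩
  rw [heq]
  have hbdd : BddAbove (Set.range fun j : Fin n => ‖η j‖ ^ 2) :=
    Set.Finite.bddAbove (Set.finite_range _)
  calc ∑ j : Fin n, ‖C ((j : ℤ) + 1) (η j)‖ ^ 2
      ≤ ∑ _j : Fin n, ⨆ j : Fin n, ‖η j‖ ^ 2 := by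
        refine Finset.sum_le_sum fun j _ => ?_
        exact le_trans (wm_contraction b C hC hC0 k _ (hη j)) (le_ciSup hbdd j)
    _ = n * ⨆ j : Fin n, ‖η j‖ ^ 2 := by
        rw [Finset.sum_const, Finset.card_univ, Fintype.card_fin, nsmul_eq_mul]
end

section
/- For any word Y of the form Y = (A†_{i_1})^{k_1} ⋯ (A†_{i_m})^{k_m} A_{j_1}^{l_1} ⋯ A_{j_n}^{l_n} in the weakly monotone generators (with i_1 > ⋯ > i_m, j_1 < ⋯ < j_n) that is not of the form A_i† A_i, the shifted Cesàro averages satisfy ‖(1/n) Σ_{k=0}^{n−1} τ^k(Y)‖ ≤ 1/√n for all n ∈ ℕ, where τ shifts every index by +1. -/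
open scoped ComplexOrder

section Aux

variable {H : Type} [NormedAddCommGroup H] [InnerProductSpace ℂ H] [CompleteSpace H]

local notation "⟪" x ", " y "⟫" => @inner ℂ _ _ x y

lemma WMIdx.ext' {s t : WMIdx} (h : s.1 = t.1) : s = t := Subtype.ext h

lemma WM.cons_fst (i : ℤ) (l : WMIdx) (h : WMIdx.ok i l) :
    (WMIdx.cons i l h).1 = i :: l.1 := rfl

lemma WM.clm_ext_basis (b : HilbertBasis WMIdx ℂ H) {T S : H →L[ℂ] H}
    (h : ∀ l, T (b l) = S (b l)) : T = S := by
  apply ContinuousLinearMap.ext_on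
    (Submodule.dense_iff_topologicalClosure_eq_top.mpr b.dense_span)
  rintro - ⟨l, rfl⟩
  exact h l

lemma WM.vec_ext_basis (b : HilbertBasis WMIdx ℂ H) {v w : H}
    (h : ∀ s, ⟪b s, v⟫ = ⟪b s, w⟫) : v = w := by
  apply b.repr.injective
  apply lp.ext
  funext s
  rw [b.repr_apply_apply, b.repr_apply_apply]
  exact h s

lemma WM.inner_bb_self (b : HilbertBasis WMIdx ℂ H) (s : WMIdx) :
    ⟪b s, b s⟫ = (1 : ℂ) := by
  classical
  simpa using orthonormal_iff_ite.mp b.orthonormal s s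

lemma WM.inner_bb_ne (b : HilbertBasis WMIdx ℂ H) {s t : WMIdx} (h : s ≠ t) :
    ⟪b s, b t⟫ = 0 := by
  classical
  simpa [h] using orthonormal_iff_ite.mp b.orthonormal s t

section C

variable (b : HilbertBasis WMIdx ℂ H) (C : ℤ → H →L[ℂ] H)
  (hC : ∀ i l (h : WMIdx.ok i l), C i (b l) = b (WMIdx.cons i l h))
  (hC0 : ∀ i l, ¬ WMIdx.ok i l → C i (b l) = 0)

include hC hC0

lemma WM.starC_cons (i : ℤ) (t : WMIdx) (h : WMIdx.ok i t) :
    star (C i) (b (WMIdx.cons i t h)) = b t := by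
  apply WM.vec_ext_basis b
  intro s
  rw [ContinuousLinearMap.star_eq_adjoint, ContinuousLinearMap.adjoint_inner_right]
  by_cases hok : WMIdx.ok i s
  · rw [hC i s hok]
    by_cases hst : s = t
    · subst hst
      rw [WM.inner_bb_self, WM.inner_bb_self]
    · rw [WM.inner_bb_ne b hst, WM.inner_bb_ne b]
      intro hcon
      exact hst (WMIdx.ext' (List.cons_injective (congrArg Subtype.val hcon)))
  · rw [hC0 i s hok, inner_zero_left, WM.inner_bb_ne b]
    rintro rfl
    exact hok h

lemma WM.starC_zero (i : ℤ) (t : WMIdx) (h : t.1.head? ≠ some i) :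
    star (C i) (b t) = 0 := by
  apply WM.vec_ext_basis b
  intro s
  rw [ContinuousLinearMap.star_eq_adjoint, ContinuousLinearMap.adjoint_inner_right,
    inner_zero_right]
  by_cases hok : WMIdx.ok i s
  · rw [hC i s hok]
    apply WM.inner_bb_ne b
    rintro rfl
    exact h rfl
  · rw [hC0 i s hok, inner_zero_left]

end C

/-- "Elementary" vector: zero or a basis vector. -/
def WM.Elem (b : HilbertBasis WMIdx ℂ H) (v : H) : Prop := v = 0 ∨ ∃ l, v = b l

/-- Operators preserving elementary vectors. -/
def WM.Good (b : HilbertBasis WMIdx ℂ H) (T : H →L[ℂ] H) : Prop :=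
  ∀ v, WM.Elem b v → WM.Elem b (T v)

def WM.GoodPair (b : HilbertBasis WMIdx ℂ H) (T : H →L[ℂ] H) : Prop :=
  WM.Good b T ∧ WM.Good b (star T)

lemma WM.elem_basis (b : HilbertBasis WMIdx ℂ H) (l : WMIdx) : WM.Elem b (b l) :=
  Or.inr ⟨l, rfl⟩

lemma WM.good_one (b : HilbertBasis WMIdx ℂ H) : WM.Good b 1 := by
  intro v hv; simpa using hv

lemma WM.good_mul (b : HilbertBasis WMIdx ℂ H) {T S : H →L[ℂ] H}
    (hT : WM.Good b T) (hS : WM.Good b S) : WM.Good b (T * S) := by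
  intro v hv
  rw [ContinuousLinearMap.mul_apply]
  exact hT _ (hS _ hv)

lemma WM.good_pow (b : HilbertBasis WMIdx ℂ H) {T : H →L[ℂ] H}
    (hT : WM.Good b T) (p : ℕ) : WM.Good b (T ^ p) := by
  induction p with
  | zero => simpa using WM.good_one b
  | succ q ih => rw [pow_succ]; exact WM.good_mul b ih hT

section C2

variable (b : HilbertBasis WMIdx ℂ H) (C : ℤ → H →L[ℂ] H)
  (hC : ∀ i l (h : WMIdx.ok i l), C i (b l) = b (WMIdx.cons i l h))
  (hC0 : ∀ i l, ¬ WMIdx.ok i l → C i (b l) = 0)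

include hC hC0

lemma WM.good_C (i : ℤ) : WM.Good b (C i) := by
  rintro v (rfl | ⟨l, rfl⟩)
  · left; simp
  · by_cases hok : WMIdx.ok i l
    · right; exact ⟨WMIdx.cons i l hok, by rw [hC i l hok]⟩
    · left; rw [hC0 i l hok]

lemma WM.good_starC (i : ℤ) : WM.Good b (star (C i)) := by
  rintro v (rfl | ⟨l, rfl⟩)
  · left; simp
  · rcases hl : l.1 with - | ⟨a, t⟩
    · left
      apply WM.starC_zero b C hC hC0
      rw [hl]; simp
    · by_cases hai : a = i
      · subst hai
        have hch : (a :: t).IsChain (· ≥ ·) := hl ▸ l.2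
        have hok : WMIdx.ok a ⟨t, (List.isChain_cons.mp hch).2⟩ :=
          (List.isChain_cons.mp hch).1
        have hl' : l = WMIdx.cons a ⟨t, (List.isChain_cons.mp hch).2⟩ hok :=
          WMIdx.ext' (by rw [hl]; rfl)
        right
        refine ⟨⟨t, (List.isChain_cons.mp hch).2⟩, ?_⟩
        rw [hl']
        exact WM.starC_cons b C hC hC0 a _ hok
      · left
        apply WM.starC_zero b C hC hC0
        rw [hl]
        simp [hai]

lemma WM.goodPair_C (i : ℤ) : WM.GoodPair b (C i) :=
  ⟨WM.good_C b C hC hC0 i, WM.good_starC b C hC hC0 i⟩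

end C2

lemma WM.goodPair_one (b : HilbertBasis WMIdx ℂ H) : WM.GoodPair b 1 :=
  ⟨WM.good_one b, by rw [star_one]; exact WM.good_one b⟩

lemma WM.goodPair_mul (b : HilbertBasis WMIdx ℂ H) {T S : H →L[ℂ] H}
    (hT : WM.GoodPair b T) (hS : WM.GoodPair b S) : WM.GoodPair b (T * S) :=
  ⟨WM.good_mul b hT.1 hS.1, by rw [star_mul]; exact WM.good_mul b hS.2 hT.2⟩

lemma WM.goodPair_star (b : HilbertBasis WMIdx ℂ H) {T : H →L[ℂ] H}
    (hT : WM.GoodPair b T) : WM.GoodPair b (star T) :=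
  ⟨hT.2, by rw [star_star]; exact hT.1⟩

lemma WM.goodPair_pow (b : HilbertBasis WMIdx ℂ H) {T : H →L[ℂ] H}
    (hT : WM.GoodPair b T) (p : ℕ) : WM.GoodPair b (T ^ p) :=
  ⟨WM.good_pow b hT.1 p, by rw [star_pow]; exact WM.good_pow b hT.2 p⟩

lemma WM.goodPair_list (b : HilbertBasis WMIdx ℂ H) (L : List (H →L[ℂ] H))
    (h : ∀ T ∈ L, WM.GoodPair b T) : WM.GoodPair b L.prod := by
  induction L with
  | nil => simpa using WM.goodPair_one b
  | cons T L ih =>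
      rw [List.prod_cons]
      exact WM.goodPair_mul b (h T (by simp)) (ih fun S hS => h S (by simp [hS]))

/-- norm ≤ 1 facts -/
lemma WM.norm_one_le : ‖(1 : H →L[ℂ] H)‖ ≤ 1 := by
  rw [ContinuousLinearMap.one_def]
  exact ContinuousLinearMap.norm_id_le

lemma WM.norm_mul_le_one {T S : H →L[ℂ] H} (hT : ‖T‖ ≤ 1) (hS : ‖S‖ ≤ 1) :
    ‖T * S‖ ≤ 1 := by
  calc ‖T * S‖ ≤ ‖T‖ * ‖S‖ := norm_mul_le T S
    _ ≤ 1 := by nlinarith [norm_nonneg T, norm_nonneg S]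

lemma WM.norm_pow_le_one {T : H →L[ℂ] H} (hT : ‖T‖ ≤ 1) (p : ℕ) : ‖T ^ p‖ ≤ 1 := by
  induction p with
  | zero => simpa using (WM.norm_one_le (H := H))
  | succ q ih => rw [pow_succ]; exact WM.norm_mul_le_one ih hT

lemma WM.norm_list_le_one (L : List (H →L[ℂ] H)) (h : ∀ T ∈ L, ‖T‖ ≤ 1) :
    ‖L.prod‖ ≤ 1 := by
  induction L with
  | nil => simpa using (WM.norm_one_le (H := H))
  | cons T L ih =>
      rw [List.prod_cons]
      exact WM.norm_mul_le_one (h T (by simp)) (ih fun S hS => h S (by simp [hS]))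

section C3

variable (b : HilbertBasis WMIdx ℂ H) (C : ℤ → H →L[ℂ] H)
  (hC : ∀ i l (h : WMIdx.ok i l), C i (b l) = b (WMIdx.cons i l h))
  (hC0 : ∀ i l, ¬ WMIdx.ok i l → C i (b l) = 0)

include hC hC0

lemma WM.norm_C_le (i : ℤ) : ‖C i‖ ≤ 1 := by
  set M : H →L[ℂ] H := star (C i) * C i with hMdef
  have hMM : M * M = M := by
    apply WM.clm_ext_basis b
    intro l
    by_cases hok : WMIdx.ok i l
    · have h1 : M (b l) = b l := by
        rw [hMdef, ContinuousLinearMap.mul_apply, hC i l hok,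
          WM.starC_cons b C hC hC0 i l hok]
      rw [ContinuousLinearMap.mul_apply, h1, h1]
    · have h1 : M (b l) = 0 := by
        rw [hMdef, ContinuousLinearMap.mul_apply, hC0 i l hok, map_zero]
      rw [ContinuousLinearMap.mul_apply, h1, map_zero]
  have hsa : star M = M := by
    rw [hMdef, star_mul, star_star]
  have h1 : ‖M‖ * ‖M‖ = ‖M‖ := by
    calc ‖M‖ * ‖M‖ = ‖star M * M‖ := (CStarRing.norm_star_mul_self).symm
      _ = ‖M * M‖ := by rw [hsa]
      _ = ‖M‖ := by rw [hMM]
  have hMle : ‖M‖ ≤ 1 := by nlinarith [norm_nonneg M]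
  have h2 : ‖C i‖ * ‖C i‖ ≤ 1 := by
    calc ‖C i‖ * ‖C i‖ = ‖star (C i) * C i‖ := (CStarRing.norm_star_mul_self).symm
      _ ≤ 1 := hMle
  nlinarith [norm_nonneg (C i)]

end C3

/-- Core Hilbert-space estimate: a sum of `N` contractions with pairwise orthogonal
ranges has norm at most `√N`. -/
lemma WM.core (W : ℕ → H →L[ℂ] H) (h1 : ∀ k, ‖W k‖ ≤ 1)
    (h2 : ∀ k k', k ≠ k' → ∀ ξ η : H, ⟪W k ξ, W k' η⟫ = 0) (N : ℕ) :
    ‖∑ k ∈ Finset.range N, W k‖ ≤ Real.sqrt N := by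
  refine ContinuousLinearMap.opNorm_le_bound _ (Real.sqrt_nonneg _) fun ξ => ?_
  have hS : (∑ k ∈ Finset.range N, W k) ξ = ∑ k ∈ Finset.range N, W k ξ := by
    simp
  have h3 : ⟪(∑ k ∈ Finset.range N, W k) ξ, (∑ k ∈ Finset.range N, W k) ξ⟫
      = ∑ k ∈ Finset.range N, ⟪W k ξ, W k ξ⟫ := by
    rw [hS, sum_inner]
    refine Finset.sum_congr rfl fun k hk => ?_
    rw [inner_sum]
    refine Finset.sum_eq_single k (fun k' _ hne => h2 k k' (fun e => hne e.symm) ξ ξ)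
      (fun h => absurd hk h)
  have h4 : ‖(∑ k ∈ Finset.range N, W k) ξ‖ ^ 2
      = ∑ k ∈ Finset.range N, ‖W k ξ‖ ^ 2 := by
    have := h3
    simp only [inner_self_eq_norm_sq_to_K] at this
    exact_mod_cast this
  have h5 : ‖(∑ k ∈ Finset.range N, W k) ξ‖ ^ 2 ≤ (N : ℝ) * ‖ξ‖ ^ 2 := by
    rw [h4]
    calc ∑ k ∈ Finset.range N, ‖W k ξ‖ ^ 2
        ≤ ∑ _k ∈ Finset.range N, ‖ξ‖ ^ 2 := by
          refine Finset.sum_le_sum fun k _ => ?_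
          have h6 : ‖W k ξ‖ ≤ ‖ξ‖ := by
            calc ‖W k ξ‖ ≤ ‖W k‖ * ‖ξ‖ := (W k).le_opNorm ξ
              _ ≤ 1 * ‖ξ‖ := mul_le_mul_of_nonneg_right (h1 k) (norm_nonneg ξ)
              _ = ‖ξ‖ := one_mul _
          exact pow_le_pow_left₀ (norm_nonneg _) h6 2
      _ = (N : ℝ) * ‖ξ‖ ^ 2 := by
          rw [Finset.sum_const, Finset.card_range, nsmul_eq_mul]
  calc ‖(∑ k ∈ Finset.range N, W k) ξ‖
      = Real.sqrt (‖(∑ k ∈ Finset.range N, W k) ξ‖ ^ 2) :=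
        (Real.sqrt_sq (norm_nonneg _)).symm
    _ ≤ Real.sqrt ((N : ℝ) * ‖ξ‖ ^ 2) := Real.sqrt_le_sqrt h5
    _ = Real.sqrt N * ‖ξ‖ := by
        rw [Real.sqrt_mul (Nat.cast_nonneg N), Real.sqrt_sq (norm_nonneg ξ)]

section C4

variable (b : HilbertBasis WMIdx ℂ H) (C : ℤ → H →L[ℂ] H)
  (hC : ∀ i l (h : WMIdx.ok i l), C i (b l) = b (WMIdx.cons i l h))
  (hC0 : ∀ i l, ¬ WMIdx.ok i l → C i (b l) = 0)

include hC hC0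

/-- The main word estimate: sums of shifted words with a leading creation factor
whose index varies injectively. -/
lemma WM.word_bound (hk : ℕ → ℤ) (hinj : Function.Injective hk) (p : ℕ → ℕ)
    (hp : ∀ k, 1 ≤ p k) (R : ℕ → H →L[ℂ] H) (hRn : ∀ k, ‖R k‖ ≤ 1)
    (hRe : ∀ k, WM.Good b (R k)) (N : ℕ) :
    ‖∑ k ∈ Finset.range N, (C (hk k)) ^ (p k) * R k‖ ≤ Real.sqrt N := by
  apply WM.core
  · intro k
    exact WM.norm_mul_le_one
      (WM.norm_pow_le_one (WM.norm_C_le b C hC hC0 (hk k)) (p k)) (hRn k)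
  · intro k k' hkk ξ η
    set W : ℕ → H →L[ℂ] H := fun k => (C (hk k)) ^ (p k) * R k with hW
    suffices hz : star (W k) * W k' = 0 by
      have heq : ⟪W k ξ, W k' η⟫ = ⟪ξ, (star (W k) * W k') η⟫ := by
        conv_rhs => rw [ContinuousLinearMap.mul_apply]
        rw [ContinuousLinearMap.star_eq_adjoint]
        exact (ContinuousLinearMap.adjoint_inner_right _ _ _).symm
      rw [heq, hz]
      simp
    apply WM.clm_ext_basis b
    intro l
    rw [ContinuousLinearMap.mul_apply, ContinuousLinearMap.zero_apply]
    have hElem : WM.Elem b (((C (hk k')) ^ (p k' - 1)) (R k' (b l))) :=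
      WM.good_pow b (WM.good_C b C hC hC0 (hk k')) (p k' - 1) _
        (hRe k' _ (WM.elem_basis b l))
    have hWk' : W k' (b l) = C (hk k') (((C (hk k')) ^ (p k' - 1)) (R k' (b l))) := by
      rw [hW]
      simp only [ContinuousLinearMap.mul_apply]
      conv_lhs => rw [show p k' = (p k' - 1) + 1 from (Nat.succ_pred_eq_of_pos (hp k')).symm,
        pow_succ']
      rw [ContinuousLinearMap.mul_apply]
    rcases hElem with hv0 | ⟨t, hvt⟩
    · rw [hWk', hv0, map_zero, map_zero]
    · rw [hWk', hvt]
      by_cases hok : WMIdx.ok (hk k') t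
      · rw [hC _ _ hok]
        have hkill : ((star (C (hk k))) ^ (p k)) (b (WMIdx.cons (hk k') t hok)) = 0 := by
          conv_lhs => rw [show p k = (p k - 1) + 1 from (Nat.succ_pred_eq_of_pos (hp k)).symm,
            pow_succ]
          rw [ContinuousLinearMap.mul_apply, WM.starC_zero b C hC hC0, map_zero]
          rw [WM.cons_fst]
          simp only [List.head?_cons, ne_eq, Option.some.injEq]
          intro hcon
          exact hkk (hinj hcon.symm)
        have hstar : star (W k) = star (R k) * (star (C (hk k))) ^ (p k) := by
          rw [hW]
          simp only [star_mul, star_pow]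
        rw [hstar, ContinuousLinearMap.mul_apply, hkill, map_zero]
      · rw [hC0 _ _ hok, map_zero]

end C4

end Aux

/-- for any word
`Y = (A†_{i_1})^{k_1} ⋯ (A†_{i_m})^{k_m} A_{j_1}^{l_1} ⋯ A_{j_n}^{l_n}`
(with `i_1 > ⋯ > i_m`, `j_1 < ⋯ < j_n`, all powers `≥ 1`, and `Y` nonempty) which is
not of the form `A_i† A_i`, the Cesàro averages of the shifts of `Y` satisfy
`‖(1/N) Σ_{k=0}^{N-1} τ^k(Y)‖ ≤ 1/√N`, where `τ` shifts every index by `+1`. -/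
theorem wm_cesaro_estimate_for_words {H : Type} [NormedAddCommGroup H] [InnerProductSpace ℂ H] [CompleteSpace H]
    (b : HilbertBasis WMIdx ℂ H) (C : ℤ → H →L[ℂ] H)
    (hC : ∀ i l (h : WMIdx.ok i l), C i (b l) = b (WMIdx.cons i l h))
    (hC0 : ∀ i l, ¬ WMIdx.ok i l → C i (b l) = 0)
    (m n : ℕ) (hmn : 1 ≤ m + n)
    (iIdx : Fin m → ℤ) (hi : StrictAnti iIdx) (kpow : Fin m → ℕ) (hkpow : ∀ a, 1 ≤ kpow a)
    (jIdx : Fin n → ℤ) (hj : StrictMono jIdx) (lpow : Fin n → ℕ) (hlpow : ∀ a, 1 ≤ lpow a)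
    (hY : ¬ ∃ i0 : ℤ, m = 1 ∧ n = 1 ∧
      (∀ a : Fin m, iIdx a = i0 ∧ kpow a = 1) ∧ (∀ a : Fin n, jIdx a = i0 ∧ lpow a = 1)) :
    ∀ N : ℕ,
      ‖(N : ℂ)⁻¹ • ∑ k ∈ Finset.range N,
          ((List.ofFn fun a : Fin m => (C (iIdx a + (k : ℤ))) ^ kpow a).prod *
            (List.ofFn fun a : Fin n =>
              (ContinuousLinearMap.adjoint (C (jIdx a + (k : ℤ)))) ^ lpow a).prod)‖
        ≤ 1 / Real.sqrt N := by
  intro N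
  have key : ‖∑ k ∈ Finset.range N,
      ((List.ofFn fun a : Fin m => (C (iIdx a + (k : ℤ))) ^ kpow a).prod *
        (List.ofFn fun a : Fin n =>
          (ContinuousLinearMap.adjoint (C (jIdx a + (k : ℤ)))) ^ lpow a).prod)‖
      ≤ Real.sqrt N := by
    rcases m with - | m'
    · -- m = 0 : only annihilators; take adjoints
      obtain ⟨n', rfl⟩ : ∃ n', n = n' + 1 := by
        cases n with
        | zero => simp at hmn
        | succ n' => exact ⟨n', rfl⟩
      have hsum : ∀ k : ℕ,
          ((List.ofFn fun a : Fin 0 => (C (iIdx a + (k : ℤ))) ^ kpow a).prod *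
            (List.ofFn fun a : Fin (n' + 1) =>
              (ContinuousLinearMap.adjoint (C (jIdx a + (k : ℤ)))) ^ lpow a).prod)
          = (List.ofFn fun a : Fin (n' + 1) =>
              (star (C (jIdx a + (k : ℤ)))) ^ lpow a).prod := by
        intro k
        rw [List.ofFn_zero, List.prod_nil, one_mul]
        simp only [ContinuousLinearMap.star_eq_adjoint]
      rw [Finset.sum_congr rfl fun k _ => hsum k]
      rw [← norm_star, star_sum]
      have hQk : ∀ k : ℕ,
          star ((List.ofFn fun a : Fin (n' + 1) =>
            (star (C (jIdx a + (k : ℤ)))) ^ lpow a).prod)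
          = (C (jIdx (Fin.last n') + (k : ℤ))) ^ lpow (Fin.last n') *
            star ((List.ofFn fun i : Fin n' =>
              (star (C (jIdx i.castSucc + (k : ℤ)))) ^ lpow i.castSucc).prod) := by
        intro k
        simp only [List.ofFn_succ', List.prod_concat, star_mul, star_pow, star_star]
      rw [Finset.sum_congr rfl fun k _ => hQk k]
      apply WM.word_bound b C hC hC0
      · intro k1 k2 h12
        exact_mod_cast add_left_cancel h12
      · exact fun k => hlpow _
      · intro k
        rw [norm_star]
        apply WM.norm_list_le_one
        intro T hT
        rw [List.mem_ofFn] at hT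
        obtain ⟨a, rfl⟩ := hT
        exact WM.norm_pow_le_one (by rw [norm_star]; exact WM.norm_C_le b C hC hC0 _) _
      · intro k
        have hgp : WM.GoodPair b ((List.ofFn fun i : Fin n' =>
            (star (C (jIdx i.castSucc + (k : ℤ)))) ^ lpow i.castSucc).prod) := by
          apply WM.goodPair_list
          intro T hT
          rw [List.mem_ofFn] at hT
          obtain ⟨a, rfl⟩ := hT
          exact WM.goodPair_pow b (WM.goodPair_star b (WM.goodPair_C b C hC hC0 _)) _
        exact hgp.2
    · -- m = m' + 1 : leading creation factor
      have hsum : ∀ k : ℕ,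
          ((List.ofFn fun a : Fin (m' + 1) => (C (iIdx a + (k : ℤ))) ^ kpow a).prod *
            (List.ofFn fun a : Fin n =>
              (ContinuousLinearMap.adjoint (C (jIdx a + (k : ℤ)))) ^ lpow a).prod)
          = (C (iIdx 0 + (k : ℤ))) ^ kpow 0 *
            ((List.ofFn fun a : Fin m' =>
              (C (iIdx a.succ + (k : ℤ))) ^ kpow a.succ).prod *
             (List.ofFn fun a : Fin n =>
              (star (C (jIdx a + (k : ℤ)))) ^ lpow a).prod) := by
        intro k
        rw [List.ofFn_succ, List.prod_cons, mul_assoc]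
        simp only [ContinuousLinearMap.star_eq_adjoint]
      rw [Finset.sum_congr rfl fun k _ => hsum k]
      apply WM.word_bound b C hC hC0
      · intro k1 k2 h12
        exact_mod_cast add_left_cancel h12
      · exact fun k => hkpow _
      · intro k
        apply WM.norm_mul_le_one
        · apply WM.norm_list_le_one
          intro T hT
          rw [List.mem_ofFn] at hT
          obtain ⟨a, rfl⟩ := hT
          exact WM.norm_pow_le_one (WM.norm_C_le b C hC hC0 _) _
        · apply WM.norm_list_le_one
          intro T hT
          rw [List.mem_ofFn] at hT
          obtain ⟨a, rfl⟩ := hT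
          exact WM.norm_pow_le_one (by rw [norm_star]; exact WM.norm_C_le b C hC hC0 _) _
      · intro k
        have hgood : WM.GoodPair b
            ((List.ofFn fun a : Fin m' =>
              (C (iIdx a.succ + (k : ℤ))) ^ kpow a.succ).prod *
             (List.ofFn fun a : Fin n =>
              (star (C (jIdx a + (k : ℤ)))) ^ lpow a).prod) := by
          apply WM.goodPair_mul
          · apply WM.goodPair_list
            intro T hT
            rw [List.mem_ofFn] at hT
            obtain ⟨a, rfl⟩ := hT
            exact WM.goodPair_pow b (WM.goodPair_C b C hC hC0 _) _
          · apply WM.goodPair_list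
            intro T hT
            rw [List.mem_ofFn] at hT
            obtain ⟨a, rfl⟩ := hT
            exact WM.goodPair_pow b (WM.goodPair_star b (WM.goodPair_C b C hC hC0 _)) _
        exact hgood.1
  -- finish
  rcases Nat.eq_zero_or_pos N with rfl | hN
  · simp
  · rw [norm_smul]
    have hnorm : ‖((N : ℂ))⁻¹‖ = (N : ℝ)⁻¹ := by
      rw [norm_inv, Complex.norm_natCast]
    rw [hnorm]
    have hNpos : (0 : ℝ) < N := by exact_mod_cast hN
    have hs : 0 < Real.sqrt N := Real.sqrt_pos.mpr hNpos
    have hsq : Real.sqrt N * Real.sqrt N = (N : ℝ) := Real.mul_self_sqrt (le_of_lt hNpos)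
    calc (N : ℝ)⁻¹ * ‖∑ k ∈ Finset.range N, _‖ ≤ (N : ℝ)⁻¹ * Real.sqrt N := by
          exact mul_le_mul_of_nonneg_left key (by positivity)
      _ = 1 / Real.sqrt N := by
          rw [eq_div_iff (ne_of_gt hs), mul_assoc, hsq]
          exact inv_mul_cancel₀ (ne_of_gt hNpos)
end

section
/- Let (A, Φ) be a C*-dynamical system (A a unital C*-algebra, Φ a unital *-endomorphism) and A^Φ its fixed-point subalgebra. Then every pure state on A^Φ extends to an extreme point of the convex set of Φ-invariant states on A. -/
open scoped ComplexOrder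
set_option linter.unusedSectionVars false
set_option linter.unusedTactic false
set_option maxHeartbeats 1000000

section PosFunctional
variable {X : Type*} [Ring X] [StarRing X] [Algebra ℂ X] [StarModule ℂ X]
  (f : X →ₗ[ℂ] ℂ) (hpos : ∀ a : X, 0 ≤ f (star a * a))

lemma expand_quad (c : ℂ) (x y : X) :
    f (star (x + c • y) * (x + c • y)) = f (star x * x) + c * f (star x * y)
      + (starRingEnd ℂ) c * f (star y * x) + ((starRingEnd ℂ) c * c) * f (star y * y) := by
  simp only [star_add, star_smul, add_mul, mul_add, smul_mul_assoc, mul_smul_comm, smul_smul,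
    map_add, map_smul, smul_eq_mul, RCLike.star_def]
  ring

include hpos
set_option linter.unusedSectionVars false

lemma im_pos_apply (a : X) : (f (star a * a)).im = 0 := by
  have := (Complex.le_def.mp (hpos a)).2
  simpa using this.symm

lemma herm (a : X) : f (star a) = (starRingEnd ℂ) (f a) := by
  have him : ∀ z : X, (f (star z * z)).im = 0 := im_pos_apply f hpos
  have key : ∀ x y : X, f (star y * x) = (starRingEnd ℂ) (f (star x * y)) := by
    intro x y
    set p := f (star x * y) with hp
    set q := f (star y * x) with hq
    have h1 := expand_quad f 1 x y
    have h2 := expand_quad f Complex.I x y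
    simp only [one_smul, map_one, one_mul, mul_one] at h1
    simp only [Complex.conj_I] at h2
    have e1 : p.im + q.im = 0 := by
      have h := him (x + (1:ℂ) • y)
      rw [one_smul] at h
      rw [h1] at h
      simp only [Complex.add_im, him x, him y] at h
      linarith
    have e2 : p.re - q.re = 0 := by
      have h := him (x + Complex.I • y)
      rw [h2] at h
      simp only [Complex.add_im, Complex.sub_im, Complex.mul_im, Complex.neg_re, Complex.neg_im,
        Complex.I_re, Complex.I_im, him x, him y] at h
      linarith
    apply Complex.ext
    · simp only [Complex.conj_re]; linarith
    · simp only [Complex.conj_im]; linarith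
  have h2 := congrArg (starRingEnd ℂ) (key a 1)
  simpa using h2.symm

lemma cs_diag (h1 : f 1 = 1) (a : X) : ‖f a‖ ^ 2 ≤ (f (star a * a)).re := by
  have hh := herm f hpos
  have key := hpos (a + (-(f a)) • 1)
  rw [expand_quad f (-(f a)) a 1] at key
  simp only [star_one, mul_one, one_mul, h1, hh, map_neg] at key
  have hre := (Complex.le_def.mp key).1
  have hns : ((starRingEnd ℂ) (f a) * f a).re = ‖f a‖ ^ 2 := by
    rw [Complex.mul_re]
    simp only [Complex.conj_re, Complex.conj_im, Complex.sq_norm,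
      Complex.normSq_apply]
    ring
  simp only [Complex.zero_re, Complex.add_re, Complex.neg_re, Complex.mul_re] at hre ⊢
  have : (f (star a * a)).re - ((starRingEnd ℂ) (f a) * f a).re ≥ 0 := by
    simp only [Complex.mul_re, Complex.conj_re, Complex.conj_im, Complex.neg_re,
      Complex.neg_im] at hre ⊢
    nlinarith [hre]
  linarith [hns ▸ this]

lemma pos_of_nonneg [PartialOrder X] [StarOrderedRing X] {x : X} (hx : 0 ≤ x) : 0 ≤ f x := by
  rw [StarOrderedRing.nonneg_iff] at hx
  induction hx using AddSubmonoid.closure_induction with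
  | mem z hz => obtain ⟨s, rfl⟩ := hz; exact hpos s
  | zero => simp
  | add x y _ _ hx hy => rw [map_add]; exact add_nonneg hx hy

end PosFunctional

section CStar
variable {A : Type} [NormedRing A] [StarRing A] [CStarRing A] [CompleteSpace A]
    [NormedAlgebra ℂ A] [StarModule ℂ A]

lemma state_re_le (f : A →ₗ[ℂ] ℂ) (hpos : ∀ a : A, 0 ≤ f (star a * a)) (h1 : f 1 = 1)
    (a : A) : (f (star a * a)).re ≤ ‖a‖ ^ 2 := by
  letI : CStarAlgebra A := {}
  letI : PartialOrder A := CStarAlgebra.spectralOrder A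
  letI : StarOrderedRing A := CStarAlgebra.spectralOrderedRing A
  have hle : star a * a ≤ algebraMap ℝ A (‖a‖ ^ 2) :=
    CStarAlgebra.star_mul_le_algebraMap_norm_sq
  have hd : 0 ≤ f (algebraMap ℝ A (‖a‖ ^ 2) - star a * a) :=
    pos_of_nonneg f hpos (sub_nonneg.mpr hle)
  have halg : f (algebraMap ℝ A (‖a‖ ^ 2)) = (‖a‖ ^ 2 : ℝ) := by
    rw [IsScalarTower.algebraMap_apply ℝ ℂ A, Algebra.algebraMap_eq_smul_one, map_smul,
      smul_eq_mul, h1, mul_one]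
    simp
  rw [map_sub, halg] at hd
  have := (Complex.le_def.mp hd).1
  simp only [Complex.zero_re, Complex.sub_re, Complex.ofReal_re] at this
  linarith

lemma state_norm_le (f : A →ₗ[ℂ] ℂ) (hpos : ∀ a : A, 0 ≤ f (star a * a)) (h1 : f 1 = 1)
    (a : A) : ‖f a‖ ≤ ‖a‖ := by
  have h := (cs_diag f hpos h1 a).trans (state_re_le f hpos h1 a)
  nlinarith [norm_nonneg (f a), norm_nonneg a]

end CStar

section CStar2
variable {A : Type} [NormedRing A] [StarRing A] [CStarRing A] [CompleteSpace A]
    [NormedAlgebra ℂ A] [StarModule ℂ A]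

lemma sa_real (hA : Nontrivial A) (g : A →L[ℂ] ℂ) (hg : ‖g‖ ≤ 1) (h1 : g 1 = 1)
    {a : A} (ha : IsSelfAdjoint a) : (g a).im = 0 := by
  letI : CStarAlgebra A := {}
  set x := (g a).re with hx
  set y := (g a).im with hy
  have key : ∀ t : ℝ, x ^ 2 + (y + t) ^ 2 ≤ ‖a‖ ^ 2 + t ^ 2 := by
    intro t
    set v := a + ((t : ℂ) * Complex.I) • 1 with hv
    have hgv : g v = g a + (t : ℂ) * Complex.I := by
      simp [hv, map_add, map_smul, h1, smul_eq_mul]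
    have hnv : ‖v‖ ^ 2 ≤ ‖a‖ ^ 2 + t ^ 2 := by
      have hsq : ‖v‖ ^ 2 = ‖star v * v‖ := by
        rw [CStarRing.norm_star_mul_self, sq]
      have hstar : star v = a - ((t : ℂ) * Complex.I) • 1 := by
        simp [hv, star_add, star_smul, ha.star_eq, Complex.conj_I, sub_eq_add_neg]
      have hprod : star v * v = a * a + ((t : ℝ) ^ 2 : ℂ) • 1 := by
        rw [hstar, hv]
        simp only [sub_mul, mul_add, smul_sub, smul_mul_assoc, mul_smul_comm, smul_smul,
          one_mul, mul_one]
        have hI : ((t : ℂ) * Complex.I) * ((t : ℂ) * Complex.I) = -(((t : ℝ) ^ 2 : ℂ)) := by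
          rw [mul_mul_mul_comm, Complex.I_mul_I]; push_cast; ring
        rw [hI]
        module
      haveI := hA
      rw [hsq, hprod]
      calc ‖a * a + ((t : ℝ) ^ 2 : ℂ) • 1‖ ≤ ‖a * a‖ + ‖((t : ℝ) ^ 2 : ℂ) • 1‖ := norm_add_le _ _
        _ ≤ ‖a‖ * ‖a‖ + ‖(((t : ℝ) ^ 2 : ℂ))‖ * ‖(1 : A)‖ := by
            gcongr
            · exact norm_mul_le a a
            · rw [norm_smul]
        _ = ‖a‖ ^ 2 + t ^ 2 := by
            rw [norm_one]
            simp [sq]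
    have hlhs : ‖g v‖ ^ 2 = x ^ 2 + (y + t) ^ 2 := by
      rw [hgv]
      rw [Complex.sq_norm, Complex.normSq_apply]
      simp [hx, hy]
      ring
    have hb : ‖g v‖ ≤ ‖v‖ := by
      calc ‖g v‖ ≤ ‖g‖ * ‖v‖ := g.le_opNorm v
      _ ≤ 1 * ‖v‖ := by gcongr
      _ = ‖v‖ := one_mul _
    nlinarith [norm_nonneg v, norm_nonneg (g v)]
  by_contra hy0
  set C := ‖a‖ ^ 2 - x ^ 2 - y ^ 2 with hC
  have hkey : ∀ t : ℝ, 2 * t * y ≤ C := by intro t; nlinarith [key t]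
  have h2y : (2 * y) ≠ 0 := by simpa using hy0
  have ht0 : 2 * ((C + 1) / (2 * y)) * y = C + 1 := by field_simp
  linarith [hkey ((C + 1) / (2 * y)), ht0]

lemma norm_one_unital_pos (hA : Nontrivial A) (g : A →L[ℂ] ℂ) (hg : ‖g‖ ≤ 1) (h1 : g 1 = 1)
    (b : A) : 0 ≤ g (star b * b) := by
  letI : CStarAlgebra A := {}
  letI : PartialOrder A := CStarAlgebra.spectralOrder A
  letI : StarOrderedRing A := CStarAlgebra.spectralOrderedRing A
  set c := star b * b with hc
  have hsa : IsSelfAdjoint c := IsSelfAdjoint.star_mul_self b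
  have hcnn : 0 ≤ c := star_mul_self_nonneg b
  set d := algebraMap ℝ A ‖c‖ - c with hd
  have hd0 : 0 ≤ d := sub_nonneg.mpr (IsSelfAdjoint.le_algebraMap_norm_self hsa)
  have hdle : d ≤ algebraMap ℝ A ‖c‖ := by
    rw [hd]
    exact sub_le_self _ hcnn
  have hdn : ‖d‖ ≤ ‖c‖ := (CStarAlgebra.norm_le_iff_le_algebraMap d (norm_nonneg c)).mpr hdle
  have him : (g c).im = 0 := sa_real hA g hg h1 hsa
  have halg : g (algebraMap ℝ A ‖c‖) = (‖c‖ : ℂ) := by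
    rw [IsScalarTower.algebraMap_apply ℝ ℂ A, Algebra.algebraMap_eq_smul_one, map_smul,
      smul_eq_mul, h1, mul_one]
    simp [Complex.coe_algebraMap]
  have hgd : g d = (‖c‖ : ℂ) - g c := by rw [hd, map_sub, halg]
  have hbd : ‖g d‖ ≤ ‖c‖ := by
    calc ‖g d‖ ≤ ‖g‖ * ‖d‖ := g.le_opNorm d
      _ ≤ 1 * ‖c‖ := by gcongr
      _ = ‖c‖ := one_mul _
  rw [hgd] at hbd
  have hnorm : ‖(‖c‖ : ℂ) - g c‖ = |‖c‖ - (g c).re| := by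
    have : (‖c‖ : ℂ) - g c = ((‖c‖ - (g c).re : ℝ) : ℂ) := by
      apply Complex.ext <;> simp [him]
    rw [this, Complex.norm_real, Real.norm_eq_abs]
  rw [hnorm] at hbd
  rw [Complex.le_def]
  constructor
  · simp only [Complex.zero_re]
    cases abs_le.mp hbd with
    | intro h1 h2 => linarith
  · simp [him]

lemma exists_sqrt_fixed (Φ : A →⋆ₐ[ℂ] A) {a : A} (ha : Φ a = a) :
    ∃ s : A, Φ s = s ∧ star s * s = algebraMap ℝ A (‖a‖ ^ 2) - star a * a := by
  letI : CStarAlgebra A := {}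
  letI : PartialOrder A := CStarAlgebra.spectralOrder A
  letI : StarOrderedRing A := CStarAlgebra.spectralOrderedRing A
  set d := algebraMap ℝ A (‖a‖ ^ 2) - star a * a with hd
  have hdsa : IsSelfAdjoint d := by
    refine IsSelfAdjoint.sub ?_ (IsSelfAdjoint.star_mul_self a)
    exact IsSelfAdjoint.algebraMap A (isSelfAdjoint_iff.mpr rfl)
  have hd0 : 0 ≤ d := sub_nonneg.mpr CStarAlgebra.star_mul_le_algebraMap_norm_sq
  set s := cfc Real.sqrt d with hs
  have hssa : IsSelfAdjoint s := cfc_predicate Real.sqrt d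
  have hmul : s * s = d := by
    rw [hs, ← cfc_mul Real.sqrt Real.sqrt d]
    have : ∀ x ∈ spectrum ℝ d, Real.sqrt x * Real.sqrt x = (id x : ℝ) := by
      intro x hx
      have hx0 : 0 ≤ x := spectrum_nonneg_of_nonneg hd0 hx
      simp [Real.mul_self_sqrt hx0]
    rw [cfc_congr this, cfc_id ℝ d]
  have hcont : Continuous Φ := by
    refine AddMonoidHomClass.continuous_of_bound Φ 1 fun x => ?_
    simpa using NonUnitalStarAlgHom.norm_apply_le Φ x
  have hΦd : Φ d = d := by
    rw [hd, map_sub, map_mul, map_star, ha]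
    congr 1
    rw [IsScalarTower.algebraMap_apply ℝ ℂ A]
    exact AlgHomClass.commutes Φ _
  have hΦs : Φ s = s := by
    rw [hs, StarAlgHom.map_cfc Φ Real.sqrt d (hφ := hcont), hΦd]
  exact ⟨s, hΦs, by rw [hssa.star_eq, hmul]⟩

def fixedStarSubalgebra (Φ : A →⋆ₐ[ℂ] A) : StarSubalgebra ℂ A where
  carrier := {a | Φ a = a}
  mul_mem' := by intro a b ha hb; simp only [Set.mem_setOf_eq] at *; rw [map_mul, ha, hb]
  one_mem' := by simp only [Set.mem_setOf_eq]; exact map_one Φ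
  add_mem' := by intro a b ha hb; simp only [Set.mem_setOf_eq] at *; rw [map_add, ha, hb]
  zero_mem' := by simp only [Set.mem_setOf_eq]; exact map_zero Φ
  algebraMap_mem' := fun c => by simp only [Set.mem_setOf_eq]; exact AlgHomClass.commutes Φ c
  star_mem' := by intro a ha; simp only [Set.mem_setOf_eq] at *; rw [map_star, ha]

lemma mem_fixedStarSubalgebra {Φ : A →⋆ₐ[ℂ] A} {a : A} :
    a ∈ fixedStarSubalgebra Φ ↔ Φ a = a := Iff.rfl

theorem omega_bound (Φ : A →⋆ₐ[ℂ] A) (ω : {a : A // Φ a = a} → ℂ)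
    (hadd : ∀ x y z : {a : A // Φ a = a}, z.1 = x.1 + y.1 → ω z = ω x + ω y)
    (hsmul : ∀ (c : ℂ) (x z : {a : A // Φ a = a}), z.1 = c • x.1 → ω z = c * ω x)
    (hone : ∀ z : {a : A // Φ a = a}, z.1 = 1 → ω z = 1)
    (hposω : ∀ x z : {a : A // Φ a = a}, z.1 = star x.1 * x.1 → 0 ≤ ω z)
    (a : A) (h : Φ a = a) : ‖ω ⟨a, h⟩‖ ≤ ‖a‖ := by
  set B := fixedStarSubalgebra Φ with hB
  have hmem : ∀ x : ↥B, Φ x.1 = x.1 := fun x => x.2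
  set f₀' : ↥B → ℂ := fun x => ω ⟨x.1, x.2⟩ with hf₀'
  have hf_add : ∀ x y : ↥B, f₀' (x + y) = f₀' x + f₀' y := by
    intro x y
    exact hadd ⟨x.1, x.2⟩ ⟨y.1, y.2⟩ ⟨(x + y).1, (x + y).2⟩ rfl
  have hf_smul : ∀ (c : ℂ) (x : ↥B), f₀' (c • x) = c * f₀' x := by
    intro c x
    exact hsmul c ⟨x.1, x.2⟩ ⟨(c • x).1, (c • x).2⟩ rfl
  set f₀ : ↥B →ₗ[ℂ] ℂ :=
    { toFun := f₀', map_add' := hf_add, map_smul' := fun c x => hf_smul c x } with hf₀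
  have hone' : f₀ 1 = 1 := hone ⟨(1 : ↥B).1, (1 : ↥B).2⟩ rfl
  have hpos' : ∀ x : ↥B, 0 ≤ f₀ (star x * x) := by
    intro x
    exact hposω ⟨x.1, x.2⟩ ⟨(star x * x).1, (star x * x).2⟩ rfl
  have hre_le : ∀ x : ↥B, (f₀ (star x * x)).re ≤ ‖x.1‖ ^ 2 := by
    intro x
    obtain ⟨s, hΦs, hss⟩ := exists_sqrt_fixed Φ (hmem x)
    set y : ↥B := ⟨s, hΦs⟩ with hy
    have hsum : star x * x + star y * y = ((‖x.1‖ ^ 2 : ℝ) : ℂ) • (1 : ↥B) := by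
      apply Subtype.ext
      show star x.1 * x.1 + star s * s = ((‖x.1‖ ^ 2 : ℝ) : ℂ) • (1 : A)
      have habel : star x.1 * x.1 + (algebraMap ℝ A (‖x.1‖ ^ 2) - star x.1 * x.1)
          = algebraMap ℝ A (‖x.1‖ ^ 2) := by abel
      rw [hss, habel, IsScalarTower.algebraMap_apply ℝ ℂ A, Algebra.algebraMap_eq_smul_one]
      norm_num [Complex.coe_algebraMap]
    have hval : f₀ (star x * x) + f₀ (star y * y) = ((‖x.1‖ ^ 2 : ℝ) : ℂ) := by
      rw [← map_add, hsum, map_smul, hone', smul_eq_mul, mul_one]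
    have h2 := (Complex.le_def.mp (hpos' y)).1
    have h3 := congrArg Complex.re hval
    simp only [Complex.add_re, Complex.ofReal_re, Complex.zero_re] at h2 h3
    linarith
  have hcs := cs_diag f₀ hpos' hone' ⟨a, h⟩
  have hre := hre_le ⟨a, h⟩
  have hfx : f₀ ⟨a, h⟩ = ω ⟨a, h⟩ := rfl
  rw [hfx] at hcs
  nlinarith [norm_nonneg (ω ⟨a, h⟩), norm_nonneg a, hcs, hre]

def sIter (Φ : A →⋆ₐ[ℂ] A) : ℕ → (A →⋆ₐ[ℂ] A)
  | 0 => StarAlgHom.id ℂ A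
  | n + 1 => Φ.comp (sIter Φ n)

lemma sIter_zero (Φ : A →⋆ₐ[ℂ] A) (a : A) : sIter Φ 0 a = a := rfl

lemma sIter_succ (Φ : A →⋆ₐ[ℂ] A) (n : ℕ) (a : A) :
    sIter Φ (n + 1) a = Φ (sIter Φ n a) := rfl

lemma sIter_fixed (Φ : A →⋆ₐ[ℂ] A) {a : A} (h : Φ a = a) (n : ℕ) : sIter Φ n a = a := by
  induction n with
  | zero => rfl
  | succ n ih => rw [sIter_succ, ih, h]

lemma sIter_comm (Φ : A →⋆ₐ[ℂ] A) (n : ℕ) (a : A) :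
    sIter Φ n (Φ a) = sIter Φ (n + 1) a := by
  induction n with
  | zero => rfl
  | succ n ih => rw [sIter_succ, ih]; rfl

lemma sIter_norm (Φ : A →⋆ₐ[ℂ] A) (n : ℕ) (a : A) : ‖sIter Φ n a‖ ≤ ‖a‖ := by
  letI : CStarAlgebra A := {}
  induction n with
  | zero => exact le_rfl
  | succ n ih =>
    rw [sIter_succ]
    exact (NonUnitalStarAlgHom.norm_apply_le Φ _).trans ih

end CStar2

theorem pure_state_on_fixed_points_extends_to_extreme_invariant_state
    {A : Type} [NormedRing A] [StarRing A] [CStarRing A] [CompleteSpace A]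
    [NormedAlgebra ℂ A] [StarModule ℂ A]
    (Φ : A →⋆ₐ[ℂ] A)
    (ω : {a : A // Φ a = a} → ℂ)
    (hω : ω ∈ Set.extremePoints ℝ
      {ψ : {a : A // Φ a = a} → ℂ |
        (∀ x y z : {a : A // Φ a = a}, z.1 = x.1 + y.1 → ψ z = ψ x + ψ y) ∧
        (∀ (c : ℂ) (x z : {a : A // Φ a = a}), z.1 = c • x.1 → ψ z = c * ψ x) ∧
        (∀ z : {a : A // Φ a = a}, z.1 = 1 → ψ z = 1) ∧
        (∀ x z : {a : A // Φ a = a}, z.1 = star x.1 * x.1 → 0 ≤ ψ z)}) :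
    ∃ φ : A →ₗ[ℂ] ℂ,
      (⇑φ) ∈ Set.extremePoints ℝ
        {ψ : A → ℂ | ∃ φ' : A →ₗ[ℂ] ℂ, ψ = ⇑φ' ∧ φ' 1 = 1 ∧
          (∀ a : A, 0 ≤ φ' (star a * a)) ∧ (∀ a : A, φ' (Φ a) = φ' a)} ∧
      ∀ z : {a : A // Φ a = a}, φ z.1 = ω z := by
  obtain ⟨hωmem, hωext⟩ := hω
  obtain ⟨hadd, hsmul, hone, hposω⟩ := hωmem
  -- A is nontrivial
  haveI hA : Nontrivial A := by
    by_contra hnt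
    rw [not_nontrivial_iff_subsingleton] at hnt
    have h10 : (0 : A) = 1 := Subsingleton.elim _ _
    have h1 := hone ⟨0, map_zero Φ⟩ h10
    have h2 := hadd ⟨0, map_zero Φ⟩ ⟨0, map_zero Φ⟩ ⟨0, map_zero Φ⟩ (by simp)
    rw [h1] at h2
    norm_num at h2
  -- the fixed-point submodule and the state on it
  set M : Submodule ℂ A :=
    { carrier := {a | Φ a = a}
      add_mem' := by intro a b ha hb; simp only [Set.mem_setOf_eq] at *; rw [map_add, ha, hb]
      zero_mem' := map_zero Φ
      smul_mem' := by
        intro c a ha; simp only [Set.mem_setOf_eq] at *; rw [map_smul, ha] } with hM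
  have hmemM : ∀ x : ↥M, Φ x.1 = x.1 := fun x => x.2
  set f₁ : ↥M →ₗ[ℂ] ℂ :=
    { toFun := fun x => ω ⟨x.1, x.2⟩
      map_add' := fun x y => hadd ⟨x.1, x.2⟩ ⟨y.1, y.2⟩ ⟨(x + y).1, (x + y).2⟩ rfl
      map_smul' := fun c x => hsmul c ⟨x.1, x.2⟩ ⟨(c • x).1, (c • x).2⟩ rfl } with hf₁
  have hf₁bound : ∀ x : ↥M, ‖f₁ x‖ ≤ 1 * ‖x‖ := by
    intro x
    rw [one_mul]
    exact omega_bound Φ ω hadd hsmul hone hposω x.1 x.2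
  set f₁c : ↥M →L[ℂ] ℂ := f₁.mkContinuous 1 hf₁bound with hf₁c
  obtain ⟨g0, hg0ext, hg0norm⟩ := exists_extension_norm_eq M f₁c
  have hg0n : ‖g0‖ ≤ 1 := by
    rw [hg0norm]
    exact f₁.mkContinuous_norm_le zero_le_one hf₁bound
  have hg01 : g0 1 = 1 := by
    have h : g0 1 = f₁c ⟨1, map_one Φ⟩ := hg0ext ⟨1, map_one Φ⟩
    rw [h]
    exact hone ⟨1, map_one Φ⟩ rfl
  have hg0pos : ∀ a : A, 0 ≤ g0 (star a * a) := norm_one_unital_pos hA g0 hg0n hg01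
  have hg0b : ∀ a : A, ‖g0 a‖ ≤ ‖a‖ := fun a =>
    (g0.le_opNorm a).trans (by nlinarith [norm_nonneg a, g0.le_opNorm a, hg0n, norm_nonneg (g0 a)])
  have hg0fix : ∀ (a : A) (h : Φ a = a), g0 a = ω ⟨a, h⟩ := by
    intro a h
    have hh : g0 a = f₁c ⟨a, h⟩ := hg0ext ⟨a, h⟩
    rw [hh]
    rfl
  -- sets of states
  set St : Set (A → ℂ) := {ψ | (∀ x y : A, ψ (x + y) = ψ x + ψ y) ∧
    (∀ (c : ℂ) (x : A), ψ (c • x) = c * ψ x) ∧ ψ 1 = 1 ∧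
    ∀ a : A, 0 ≤ ψ (star a * a)} with hSt
  set Inv : Set (A → ℂ) := {ψ | ∀ a : A, ψ (Φ a) = ψ a} with hInv
  set Eω : Set (A → ℂ) := {ψ | ∀ (a : A) (h : Φ a = a), ψ a = ω ⟨a, h⟩} with hEω
  have hSdef : {ψ : A → ℂ | ∃ φ' : A →ₗ[ℂ] ℂ, ψ = ⇑φ' ∧ φ' 1 = 1 ∧
      (∀ a : A, 0 ≤ φ' (star a * a)) ∧ (∀ a : A, φ' (Φ a) = φ' a)} = St ∩ Inv := by
    ext ψ
    constructor
    · rintro ⟨φ', rfl, h1, hp, hi⟩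
      exact ⟨⟨fun x y => map_add φ' x y, fun c x => by rw [map_smul, smul_eq_mul], h1, hp⟩, hi⟩
    · rintro ⟨⟨ha, hs, h1, hp⟩, hi⟩
      exact ⟨IsLinearMap.mk' ψ ⟨ha, fun c x => by simp [hs, smul_eq_mul]⟩, rfl, h1, hp, hi⟩
  -- closedness
  have hCz : IsClosed {z : ℂ | 0 ≤ z} := by
    have : {z : ℂ | 0 ≤ z} = Complex.re ⁻¹' Set.Ici 0 ∩ Complex.im ⁻¹' {0} := by
      ext z; simp [Complex.le_def, eq_comm]
    rw [this]
    exact (isClosed_Ici.preimage Complex.continuous_re).inter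
      (isClosed_singleton.preimage Complex.continuous_im)
  have hclSt : IsClosed St := by
    have hrw : St = {ψ : A → ℂ | ∀ x y : A, ψ (x + y) = ψ x + ψ y} ∩
        ({ψ : A → ℂ | ∀ (c : ℂ) (x : A), ψ (c • x) = c * ψ x} ∩
        ({ψ : A → ℂ | ψ 1 = 1} ∩ {ψ : A → ℂ | ∀ a : A, 0 ≤ ψ (star a * a)})) := by
      ext ψ; simp only [hSt, Set.mem_setOf_eq, Set.mem_inter_iff]; try tauto
    rw [hrw]
    refine IsClosed.inter ?_ (IsClosed.inter ?_ (IsClosed.inter ?_ ?_))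
    · have : {ψ : A → ℂ | ∀ x y : A, ψ (x + y) = ψ x + ψ y}
          = ⋂ (x : A) (y : A), {ψ : A → ℂ | ψ (x + y) = ψ x + ψ y} := by
        ext ψ; simp
      rw [this]
      exact isClosed_iInter fun x => isClosed_iInter fun y =>
        isClosed_eq (continuous_apply _) ((continuous_apply x).add (continuous_apply y))
    · have : {ψ : A → ℂ | ∀ (c : ℂ) (x : A), ψ (c • x) = c * ψ x}
          = ⋂ (c : ℂ) (x : A), {ψ : A → ℂ | ψ (c • x) = c * ψ x} := by
        ext ψ; simp
      rw [this]
      exact isClosed_iInter fun c => isClosed_iInter fun x =>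
        isClosed_eq (continuous_apply _) (continuous_const.mul (continuous_apply x))
    · exact isClosed_eq (continuous_apply 1) continuous_const
    · have : {ψ : A → ℂ | ∀ a : A, 0 ≤ ψ (star a * a)}
          = ⋂ (a : A), (fun ψ : A → ℂ => ψ (star a * a)) ⁻¹' {z : ℂ | 0 ≤ z} := by
        ext ψ; simp
      rw [this]
      exact isClosed_iInter fun a => hCz.preimage (continuous_apply _)
  have hclInv : IsClosed Inv := by
    have hrw : Inv = ⋂ (a : A), {ψ : A → ℂ | ψ (Φ a) = ψ a} := by ext ψ; simp [hInv]
    rw [hrw]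
    exact isClosed_iInter fun a =>
      isClosed_eq (continuous_apply (Φ a)) (continuous_apply a)
  have hclEω : IsClosed Eω := by
    have hrw : Eω = ⋂ (z : {a : A // Φ a = a}), {ψ : A → ℂ | ψ z.1 = ω z} := by
      ext ψ
      simp only [hEω, Set.mem_setOf_eq, Set.mem_iInter]
      exact ⟨fun h z => h z.1 z.2, fun h a ha => h ⟨a, ha⟩⟩
    rw [hrw]
    exact isClosed_iInter fun z => isClosed_eq (continuous_apply _) continuous_const
  -- compactness
  set K : Set (A → ℂ) := Set.pi Set.univ (fun a : A => Metric.closedBall (0 : ℂ) ‖a‖) with hK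
  have hKcomp : IsCompact K := isCompact_univ_pi fun a => isCompact_closedBall 0 ‖a‖
  have hStK : St ⊆ K := by
    rintro ψ ⟨ha, hs, h1, hp⟩
    intro a _
    simp only [Metric.mem_closedBall, dist_zero_right]
    exact state_norm_le (IsLinearMap.mk' ψ ⟨ha, fun c x => by simp [hs, smul_eq_mul]⟩) hp h1 a
  have hT'comp : IsCompact (St ∩ Eω) :=
    hKcomp.of_isClosed_subset (hclSt.inter hclEω) ((Set.inter_subset_left).trans hStK)
  have hTcomp : IsCompact ((St ∩ Inv) ∩ Eω) :=
    hKcomp.of_isClosed_subset ((hclSt.inter hclInv).inter hclEω)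
      (((Set.inter_subset_left).trans Set.inter_subset_left).trans hStK)
  -- Cesàro averages
  set F : ℕ → (A → ℂ) := fun n a =>
    ((n : ℂ) + 1)⁻¹ * ∑ k ∈ Finset.range (n + 1), g0 (sIter Φ k a) with hF
  have hne0 : ∀ n : ℕ, ((n : ℂ) + 1) ≠ 0 := fun n => by
    have h : ((n : ℂ) + 1) = ((n + 1 : ℕ) : ℂ) := by push_cast; ring
    rw [h]
    exact Nat.cast_ne_zero.mpr (Nat.succ_ne_zero n)
  have hinvnn : ∀ n : ℕ, 0 ≤ ((n : ℂ) + 1)⁻¹ := by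
    intro n
    have : ((n : ℂ) + 1)⁻¹ = ((((n : ℝ) + 1)⁻¹ : ℝ) : ℂ) := by push_cast; ring
    rw [this]
    rw [Complex.zero_le_real]
    positivity
  have hFmem : ∀ n, F n ∈ St ∩ Eω := by
    intro n
    refine ⟨⟨?_, ?_, ?_, ?_⟩, ?_⟩
    · intro x y
      simp only [hF, map_add, g0.map_add, Finset.sum_add_distrib, mul_add]
    · intro c x
      simp only [hF, map_smul, g0.map_smul, smul_eq_mul, ← Finset.mul_sum]
      ring
    · simp only [hF, map_one, hg01, Finset.sum_const, Finset.card_range, nsmul_eq_mul, mul_one]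
      push_cast
      exact inv_mul_cancel₀ (hne0 n)
    · intro a
      refine mul_nonneg (hinvnn n) (Finset.sum_nonneg fun k _ => ?_)
      rw [map_mul, map_star]
      exact hg0pos _
    · intro a h
      simp only [hF]
      have : ∀ k, g0 (sIter Φ k a) = ω ⟨a, h⟩ := fun k => by
        rw [sIter_fixed Φ h k]; exact hg0fix a h
      simp only [this, Finset.sum_const, Finset.card_range, nsmul_eq_mul]
      push_cast
      rw [← mul_assoc, inv_mul_cancel₀ (hne0 n), one_mul]
  -- cluster point
  obtain ⟨g, hgmem, hgclust⟩ := hT'comp.exists_mapClusterPt (u := F) (f := Filter.atTop)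
    (Filter.le_principal_iff.mpr (Filter.mem_map.mpr (Filter.Eventually.of_forall hFmem)))
  have hginv : ∀ a : A, g (Φ a) = g a := by
    intro a
    set u : (A → ℂ) → ℂ := fun ψ => ψ (Φ a) - ψ a with hu
    have hucont : Continuous u := (continuous_apply (Φ a)).sub (continuous_apply a)
    have hclust2 : MapClusterPt (u g) Filter.atTop (u ∘ F) :=
      hgclust.continuousAt_comp hucont.continuousAt
    have hcomp : ∀ n, (u ∘ F) n = ((n : ℂ) + 1)⁻¹ * (g0 (sIter Φ (n + 1) a) - g0 a) := by
      intro n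
      show F n (Φ a) - F n a = _
      have h1 : F n (Φ a) = ((n : ℂ) + 1)⁻¹ * ∑ k ∈ Finset.range (n + 1),
          g0 (sIter Φ (k + 1) a) := by
        simp only [hF]
        congr 1
        exact Finset.sum_congr rfl fun k _ => by rw [sIter_comm]
      rw [h1]
      simp only [hF]
      rw [← mul_sub, ← Finset.sum_sub_distrib]
      congr 1
      have htel := Finset.sum_range_sub (fun k => g0 (sIter Φ k a)) (n + 1)
      simpa [sIter_zero] using htel
    have htend : Filter.Tendsto (u ∘ F) Filter.atTop (nhds 0) := by
      have htend2 : Filter.Tendsto (fun n : ℕ => 1 / ((n : ℝ) + 1) * (2 * ‖a‖))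
          Filter.atTop (nhds 0) := by
        simpa using tendsto_one_div_add_atTop_nhds_zero_nat.mul_const (2 * ‖a‖)
      refine squeeze_zero_norm ?_ htend2
      · intro n
        rw [hcomp n, norm_mul]
        have hn1 : ‖((n : ℂ) + 1)⁻¹‖ = 1 / ((n : ℝ) + 1) := by
          have h2 : ((n : ℂ) + 1) = (((n : ℝ) + 1 : ℝ) : ℂ) := by push_cast; ring
          rw [h2, norm_inv, Complex.norm_real, Real.norm_eq_abs, abs_of_pos (by positivity), one_div]
        rw [hn1]
        refine mul_le_mul_of_nonneg_left ?_ (by positivity)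
        calc ‖g0 (sIter Φ (n + 1) a) - g0 a‖ ≤ ‖g0 (sIter Φ (n + 1) a)‖ + ‖g0 a‖ :=
              norm_sub_le _ _
          _ ≤ ‖a‖ + ‖a‖ := add_le_add ((hg0b _).trans (sIter_norm Φ (n + 1) a)) (hg0b a)
          _ = 2 * ‖a‖ := by ring
    have hzero : u g = 0 := by
      haveI hnb : (nhds (u g) ⊓ Filter.map (u ∘ F) Filter.atTop).NeBot := hclust2
      haveI : (nhds (u g) ⊓ nhds (0 : ℂ)).NeBot := hnb.mono (inf_le_inf_left _ htend)
      exact tendsto_nhds_unique (Filter.tendsto_id.mono_right inf_le_left) (Filter.tendsto_id.mono_right inf_le_right)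
    exact sub_eq_zero.mp hzero
  have hgT : g ∈ (St ∩ Inv) ∩ Eω := ⟨⟨hgmem.1, hginv⟩, hgmem.2⟩
  -- Krein-Milman: extreme point of the compact set of invariant states extending ω
  obtain ⟨e, heP⟩ := hTcomp.extremePoints_nonempty ⟨g, hgT⟩
  obtain ⟨heT, heExt⟩ := heP
  obtain ⟨⟨heSt, heInv⟩, heEω⟩ := heT
  obtain ⟨headd, hesmul, heone, hepos⟩ := id heSt
  -- assemble the final linear functional
  set φ : A →ₗ[ℂ] ℂ := IsLinearMap.mk' e ⟨headd, fun c x => by simp [hesmul, smul_eq_mul]⟩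
    with hφ
  have hφe : ⇑φ = e := rfl
  have hres : (fun z : {a : A // Φ a = a} => e z.1) = ω := funext fun z => heEω z.1 z.2
  refine ⟨φ, ?_, ?_⟩
  · rw [hSdef, mem_extremePoints, hφe]
    refine ⟨⟨heSt, heInv⟩, ?_⟩
    intro x₁ hx₁ x₂ hx₂ hseg
    have hr : ∀ x : A → ℂ, x ∈ St →
        (fun z : {a : A // Φ a = a} => x z.1) ∈
          {ψ : {a : A // Φ a = a} → ℂ |
            (∀ x y z : {a : A // Φ a = a}, z.1 = x.1 + y.1 → ψ z = ψ x + ψ y) ∧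
            (∀ (c : ℂ) (x z : {a : A // Φ a = a}), z.1 = c • x.1 → ψ z = c * ψ x) ∧
            (∀ z : {a : A // Φ a = a}, z.1 = 1 → ψ z = 1) ∧
            (∀ x z : {a : A // Φ a = a}, z.1 = star x.1 * x.1 → 0 ≤ ψ z)} := by
      rintro x ⟨ha, hs, h1, hp⟩
      refine ⟨?_, ?_, ?_, ?_⟩
      · intro p q r hpq; show x r.1 = x p.1 + x q.1; rw [hpq, ha]
      · intro c p r hc; show x r.1 = c * x p.1; rw [hc, hs]
      · intro r h1r; show x r.1 = 1; rw [h1r]; exact h1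
      · intro p r hpr; show 0 ≤ x r.1; rw [hpr]; exact hp p.1
    obtain ⟨α, β, hα, hβ, hαβ, heq⟩ := hseg
    have hsegω : ω ∈ openSegment ℝ (fun z : {a : A // Φ a = a} => x₁ z.1)
        (fun z : {a : A // Φ a = a} => x₂ z.1) := by
      refine ⟨α, β, hα, hβ, hαβ, ?_⟩
      rw [← hres]
      funext z
      exact congrFun heq z.1
    have hkey := hωext (hr x₁ hx₁.1) (hr x₂ hx₂.1) hsegω
    have hkey2 := hωext (hr x₂ hx₂.1) (hr x₁ hx₁.1) (by rw [openSegment_symm]; exact hsegω)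
    have hx₁E : x₁ ∈ Eω := fun a h => congrFun hkey ⟨a, h⟩
    have hx₂E : x₂ ∈ Eω := fun a h => congrFun hkey2 ⟨a, h⟩
    exact ⟨heExt ⟨hx₁, hx₁E⟩ ⟨hx₂, hx₂E⟩ ⟨α, β, hα, hβ, hαβ, heq⟩,
      heExt ⟨hx₂, hx₂E⟩ ⟨hx₁, hx₁E⟩ ⟨β, α, hβ, hα, by rw [add_comm]; exact hαβ, by rw [add_comm]; exact heq⟩⟩
  · intro z
    show e z.1 = ω z
    exact heEω z.1 z.2
end

section
/- With X_i := A_i + A_i† the weakly monotone position operators on F_wm(ℓ²(ℤ)), the averages (1/(2N+1)) Σ_{i=−N}^{N} X_i² converge in the strong operator topology, as N → ∞, to P_Ω + (1/2)(I − P_Ω). -/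
open scoped ComplexOrder

open scoped ComplexInnerProductSpace
open ContinuousLinearMap Filter Finset

namespace WMAux

theorem ok_nil (i : ℤ) (h : List.Chain' (· ≥ ·) []) : WMIdx.ok i ⟨[], h⟩ := by
  intro j hj; simp [List.head?] at hj

theorem ok_cons (i j : ℤ) (t : List ℤ) (h : List.Chain' (· ≥ ·) (j :: t)) :
    WMIdx.ok i (⟨j :: t, h⟩ : WMIdx) ↔ j ≤ i := by
  simp [WMIdx.ok]

theorem cons_inj {i : ℤ} {l m : WMIdx} {h1 : WMIdx.ok i l} {h2 : WMIdx.ok i m}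
    (h : WMIdx.cons i l h1 = WMIdx.cons i m h2) : l = m := by
  apply Subtype.ext
  have := congrArg (fun z : WMIdx => z.1) h
  simpa [WMIdx.cons] using this

variable {H : Type} [NormedAddCommGroup H] [InnerProductSpace ℂ H] [CompleteSpace H]

theorem hb_ext (b : HilbertBasis WMIdx ℂ H) {x y : H}
    (h : ∀ l, ⟪b l, x⟫ = ⟪b l, y⟫) : x = y := by
  apply b.repr.injective
  apply lp.ext
  funext l
  have := h l
  rw [← b.repr_apply_apply, ← b.repr_apply_apply] at this
  exact this

theorem hb_inner (b : HilbertBasis WMIdx ℂ H) (l m : WMIdx) [Decidable (l = m)] :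
    ⟪b l, b m⟫ = if l = m then 1 else 0 := by
  classical
  have := orthonormal_iff_ite.mp b.orthonormal l m
  rw [this]
  congr 1

end WMAux

namespace WMAux

set_option linter.unusedSectionVars false

variable {H : Type} [NormedAddCommGroup H] [InnerProductSpace ℂ H] [CompleteSpace H]
variable (b : HilbertBasis WMIdx ℂ H) (C : ℤ → H →L[ℂ] H)
variable (hC : ∀ i l (h : WMIdx.ok i l), C i (b l) = b (WMIdx.cons i l h))
variable (hC0 : ∀ i l, ¬ WMIdx.ok i l → C i (b l) = 0)
include hC hC0

theorem hA_cons (i : ℤ) (l : WMIdx) (h : WMIdx.ok i l) :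
    adjoint (C i) (b (WMIdx.cons i l h)) = b l := by
  classical
  apply hb_ext b
  intro m
  rw [adjoint_inner_right]
  by_cases hm : WMIdx.ok i m
  · rw [hC i m hm, hb_inner, hb_inner]
    refine if_congr ?_ rfl rfl
    constructor
    · exact cons_inj
    · rintro rfl; rfl
  · rw [hC0 i m hm, inner_zero_left, hb_inner, if_neg]
    rintro rfl
    exact hm h

theorem hA_zero (i : ℤ) (m : WMIdx) (hm : m.1.head? ≠ some i) :
    adjoint (C i) (b m) = 0 := by
  classical
  apply hb_ext b
  intro l
  rw [adjoint_inner_right, inner_zero_right]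
  by_cases hl : WMIdx.ok i l
  · rw [hC i l hl, hb_inner, if_neg]
    rintro rfl
    exact hm rfl
  · rw [hC0 i l hl, inner_zero_left]

end WMAux

namespace WMAux
set_option linter.unusedSectionVars false
variable {H : Type} [NormedAddCommGroup H] [InnerProductSpace ℂ H] [CompleteSpace H]
variable (b : HilbertBasis WMIdx ℂ H) (C : ℤ → H →L[ℂ] H)
variable (hC : ∀ i l (h : WMIdx.ok i l), C i (b l) = b (WMIdx.cons i l h))
variable (hC0 : ∀ i l, ¬ WMIdx.ok i l → C i (b l) = 0)
include hC hC0

theorem dense_span' : Dense ((Submodule.span ℂ (Set.range b) : Submodule ℂ H) : Set H) :=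
  Submodule.dense_iff_topologicalClosure_eq_top.mpr b.dense_span

theorem normC_le (i : ℤ) (x : H) :
    ‖C i x‖ ≤ ‖x‖ ∧ ‖adjoint (C i) (C i x)‖ ≤ ‖x‖ := by
  classical
  set D : H →L[ℂ] H := (adjoint (C i)).comp (C i) with hD
  have hDb : ∀ l : WMIdx, D (b l) = if WMIdx.ok i l then b l else 0 := by
    intro l
    by_cases hl : WMIdx.ok i l
    · rw [if_pos hl]
      simp only [hD, comp_apply, hC i l hl]
      exact hA_cons b C hC hC0 i l hl
    · rw [if_neg hl]
      simp only [hD, comp_apply, hC0 i l hl, map_zero]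
  have hDD : D.comp D = D := by
    apply ContinuousLinearMap.ext_on (dense_span' b C hC hC0)
    rintro _ ⟨l, rfl⟩
    simp only [comp_apply, hDb l]
    by_cases hl : WMIdx.ok i l
    · rw [if_pos hl, hDb l, if_pos hl]
    · rw [if_neg hl, map_zero]
  have hsa : adjoint D = D := by
    rw [hD, adjoint_comp, adjoint_adjoint]
  have hDle : ∀ y : H, ‖D y‖ ≤ ‖y‖ := by
    intro y
    rcases eq_or_ne (‖D y‖) 0 with h0 | h0
    · rw [h0]; exact norm_nonneg y
    have h1 : ‖D y‖ ^ 2 = RCLike.re ⟪D y, D y⟫ := (inner_self_eq_norm_sq _).symm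
    have h2 : ⟪D y, D y⟫ = ⟪y, D y⟫ := by
      have h2' : ⟪adjoint D y, D y⟫ = ⟪y, D (D y)⟫ := adjoint_inner_left D (D y) y
      rw [hsa] at h2'
      rw [h2', ← ContinuousLinearMap.comp_apply, hDD]
    have h3 : ‖D y‖ ^ 2 ≤ ‖y‖ * ‖D y‖ := by
      rw [h1, h2]
      exact le_trans (RCLike.re_le_norm _) (norm_inner_le_norm _ _)
    have hpos : 0 < ‖D y‖ := lt_of_le_of_ne (norm_nonneg _) (Ne.symm h0)
    nlinarith
  have hCle : ‖C i x‖ ≤ ‖x‖ := by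
    have h1 : ‖C i x‖ ^ 2 = RCLike.re ⟪C i x, C i x⟫ := (inner_self_eq_norm_sq _).symm
    have h2 : ⟪C i x, C i x⟫ = ⟪x, D x⟫ := by
      rw [hD, comp_apply, adjoint_inner_right]
    have h3 : ‖C i x‖ ^ 2 ≤ ‖x‖ ^ 2 := by
      rw [h1, h2]
      refine le_trans (RCLike.re_le_norm _) (le_trans (norm_inner_le_norm _ _) ?_)
      have := hDle x
      nlinarith [norm_nonneg x]
    nlinarith [norm_nonneg (C i x), norm_nonneg x]
  refine ⟨hCle, ?_⟩
  have h4 := hDle x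
  rw [hD] at h4
  simpa using h4

theorem normA_le (i : ℤ) (x : H) : ‖adjoint (C i) x‖ ≤ ‖x‖ := by
  rcases eq_or_ne (‖adjoint (C i) x‖) 0 with h0 | h0
  · rw [h0]; exact norm_nonneg x
  have h1 : ‖adjoint (C i) x‖ ^ 2 = RCLike.re ⟪adjoint (C i) x, adjoint (C i) x⟫ :=
    (inner_self_eq_norm_sq _).symm
  have h2 : ⟪adjoint (C i) x, adjoint (C i) x⟫ = ⟪x, C i (adjoint (C i) x)⟫ :=
    adjoint_inner_left (C i) (adjoint (C i) x) x
  have h3 : ‖adjoint (C i) x‖ ^ 2 ≤ ‖adjoint (C i) x‖ * ‖x‖ := by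
    rw [h1, h2]
    refine le_trans (RCLike.re_le_norm _) (le_trans (norm_inner_le_norm _ _) ?_)
    have := (normC_le b C hC hC0 i (adjoint (C i) x)).1
    nlinarith [norm_nonneg x, norm_nonneg (adjoint (C i) x)]
  have hpos : 0 < ‖adjoint (C i) x‖ := lt_of_le_of_ne (norm_nonneg _) (Ne.symm h0)
  nlinarith

end WMAux

noncomputable def Xop {H : Type} [NormedAddCommGroup H] [InnerProductSpace ℂ H] [CompleteSpace H]
    (C : ℤ → H →L[ℂ] H) (i : ℤ) : H →L[ℂ] H := ContinuousLinearMap.adjoint (C i) + C i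

noncomputable def TopN {H : Type} [NormedAddCommGroup H] [InnerProductSpace ℂ H] [CompleteSpace H]
    (C : ℤ → H →L[ℂ] H) (N : ℕ) : H →L[ℂ] H :=
  ((2 * (N : ℂ) + 1))⁻¹ • ∑ i ∈ Finset.Icc (-(N : ℤ)) (N : ℤ), (Xop C i) ^ 2

def idx2 (i : ℤ) : WMIdx := ⟨[i, i], by simp [List.Chain', List.isChain_cons_cons]⟩

def dd (j : ℤ) (t : List ℤ) (h : List.Chain' (· ≥ ·) (j :: t)) (i : ℤ) : WMIdx :=
  if hij : j ≤ i then
    ⟨i :: i :: j :: t, by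
      rw [List.Chain', List.isChain_cons_cons, List.isChain_cons_cons]
      exact ⟨le_refl i, hij, h⟩⟩
  else WMIdx.vac

theorem dd_of_le {j : ℤ} {t : List ℤ} {h : List.Chain' (· ≥ ·) (j :: t)} {i : ℤ} (hij : j ≤ i) :
    (dd j t h i).1 = i :: i :: j :: t := by
  simp [dd, hij]

namespace WMAux
set_option linter.unusedSectionVars false
variable {H : Type} [NormedAddCommGroup H] [InnerProductSpace ℂ H] [CompleteSpace H]
variable (b : HilbertBasis WMIdx ℂ H) (C : ℤ → H →L[ℂ] H)
variable (hC : ∀ i l (h : WMIdx.ok i l), C i (b l) = b (WMIdx.cons i l h))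
variable (hC0 : ∀ i l, ¬ WMIdx.ok i l → C i (b l) = 0)
include hC hC0

theorem sq_vac (i : ℤ) :
    ((Xop C i) ^ 2) (b WMIdx.vac) = b WMIdx.vac + b (idx2 i) := by
  have h1 : WMIdx.ok i WMIdx.vac := ok_nil i List.isChain_nil
  have e1 : Xop C i (b WMIdx.vac) = b (WMIdx.cons i WMIdx.vac h1) := by
    simp only [Xop, add_apply]
    rw [hA_zero b C hC hC0 i WMIdx.vac (by simp [WMIdx.vac]), hC i _ h1, zero_add]
  have h2 : WMIdx.ok i (WMIdx.cons i WMIdx.vac h1) := by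
    intro j hj
    simp [WMIdx.cons, WMIdx.vac] at hj
    omega
  rw [pow_two, ContinuousLinearMap.mul_apply, e1]
  simp only [Xop, add_apply]
  rw [hA_cons b C hC hC0 i WMIdx.vac h1, hC i _ h2]
  congr 2

theorem sq_lt (i j : ℤ) (t : List ℤ) (h : List.Chain' (· ≥ ·) (j :: t)) (hij : i < j) :
    ((Xop C i) ^ 2) (b ⟨j :: t, h⟩) = 0 := by
  have e1 : Xop C i (b ⟨j :: t, h⟩) = 0 := by
    simp only [Xop, add_apply]
    rw [hA_zero b C hC hC0 i ⟨j :: t, h⟩ (by simp; omega),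
      hC0 i ⟨j :: t, h⟩ (by rw [ok_cons]; omega), add_zero]
  rw [pow_two, ContinuousLinearMap.mul_apply, e1, map_zero]

theorem sq_gt (i j : ℤ) (t : List ℤ) (h : List.Chain' (· ≥ ·) (j :: t)) (hij : j < i) :
    ((Xop C i) ^ 2) (b ⟨j :: t, h⟩) = b ⟨j :: t, h⟩ + b (dd j t h i) := by
  have hok : WMIdx.ok i (⟨j :: t, h⟩ : WMIdx) := (ok_cons i j t h).mpr hij.le
  have e1 : Xop C i (b ⟨j :: t, h⟩) = b (WMIdx.cons i ⟨j :: t, h⟩ hok) := by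
    simp only [Xop, add_apply]
    rw [hA_zero b C hC hC0 i ⟨j :: t, h⟩ (by simp; omega), hC i _ hok, zero_add]
  have h2 : WMIdx.ok i (WMIdx.cons i ⟨j :: t, h⟩ hok) := by
    intro k hk
    simp [WMIdx.cons] at hk
    omega
  rw [pow_two, ContinuousLinearMap.mul_apply, e1]
  simp only [Xop, add_apply]
  rw [hA_cons b C hC hC0 i _ hok, hC i _ h2]
  congr 2
  apply Subtype.ext
  simp [WMIdx.cons, dd_of_le hij.le]

theorem sq_eq (i : ℤ) (t : List ℤ) (h : List.Chain' (· ≥ ·) (i :: t)) :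
    ((Xop C i) ^ 2) (b ⟨i :: t, h⟩)
      = (b ⟨i :: t, h⟩ + b (dd i t h i))
        + (ContinuousLinearMap.adjoint (C i) (b ⟨t, h.tail⟩) + b ⟨i :: t, h⟩) := by
  have hr : WMIdx.ok i (⟨t, h.tail⟩ : WMIdx) := by
    intro k hk
    exact (List.isChain_cons.mp h).1 k hk
  have hlr : (⟨i :: t, h⟩ : WMIdx) = WMIdx.cons i ⟨t, h.tail⟩ hr := Subtype.ext rfl
  have hok : WMIdx.ok i (⟨i :: t, h⟩ : WMIdx) := (ok_cons i i t h).mpr le_rfl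
  have h2 : WMIdx.ok i (WMIdx.cons i ⟨i :: t, h⟩ hok) := by
    intro k hk
    simp [WMIdx.cons] at hk
    omega
  have e1 : Xop C i (b ⟨i :: t, h⟩) = b ⟨t, h.tail⟩ + b (WMIdx.cons i ⟨i :: t, h⟩ hok) := by
    simp only [Xop, add_apply]
    conv_lhs => rw [hlr, hA_cons b C hC hC0 i _ hr, ← hlr, hC i _ hok]
  rw [pow_two, ContinuousLinearMap.mul_apply, e1, map_add]
  simp only [Xop, add_apply]
  rw [hC i _ hr, ← hlr, hA_cons b C hC hC0 i _ hok, hC i _ h2]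
  have hdd : WMIdx.cons i (WMIdx.cons i ⟨i :: t, h⟩ hok) h2 = dd i t h i := by
    apply Subtype.ext
    simp [WMIdx.cons, dd_of_le (le_refl i)]
  rw [hdd]
  abel

end WMAux

namespace WMAux
set_option linter.unusedSectionVars false
variable {H : Type} [NormedAddCommGroup H] [InnerProductSpace ℂ H] [CompleteSpace H]

theorem norm_sum_basis (b : HilbertBasis WMIdx ℂ H) (s : Finset ℤ) (g : ℤ → WMIdx)
    (hg : Set.InjOn g s) : ‖∑ i ∈ s, b (g i)‖ = Real.sqrt s.card := by
  classical
  have hSS : ⟪∑ i ∈ s, b (g i), ∑ i ∈ s, b (g i)⟫ = (s.card : ℂ) := by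
    rw [sum_inner]
    have hrow : ∀ i ∈ s, ⟪b (g i), ∑ k ∈ s, b (g k)⟫ = 1 := by
      intro i hi
      rw [inner_sum]
      rw [Finset.sum_eq_single i]
      · rw [hb_inner, if_pos rfl]
      · intro k hk hki
        rw [hb_inner, if_neg]
        intro he
        exact hki (hg hk hi he.symm)
      · intro hi'; exact absurd hi hi'
    rw [Finset.sum_congr rfl hrow, Finset.sum_const, nsmul_eq_mul, mul_one]
  have hn : ‖∑ i ∈ s, b (g i)‖ ^ 2 = (s.card : ℝ) := by
    have := inner_self_eq_norm_sq (𝕜 := ℂ) (∑ i ∈ s, b (g i))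
    rw [hSS] at this
    simpa using this.symm
  rw [← hn, Real.sqrt_sq (norm_nonneg _)]

theorem norm_X_sq_le (C : ℤ → H →L[ℂ] H)
    (hC1 : ∀ i (x : H), ‖C i x‖ ≤ ‖x‖) (hA1 : ∀ i (x : H), ‖adjoint (C i) x‖ ≤ ‖x‖)
    (i : ℤ) (x : H) : ‖((Xop C i) ^ 2) x‖ ≤ 4 * ‖x‖ := by
  have hX : ∀ y : H, ‖Xop C i y‖ ≤ 2 * ‖y‖ := by
    intro y
    calc ‖Xop C i y‖ ≤ ‖adjoint (C i) y‖ + ‖C i y‖ := norm_add_le _ _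
    _ ≤ ‖y‖ + ‖y‖ := add_le_add (hA1 i y) (hC1 i y)
    _ = 2 * ‖y‖ := by ring
  rw [pow_two, ContinuousLinearMap.mul_apply]
  calc ‖Xop C i (Xop C i x)‖ ≤ 2 * ‖Xop C i x‖ := hX _
  _ ≤ 2 * (2 * ‖x‖) := by have := hX x; nlinarith
  _ = 4 * ‖x‖ := by ring

theorem norm_TopN_le (C : ℤ → H →L[ℂ] H)
    (hC1 : ∀ i (x : H), ‖C i x‖ ≤ ‖x‖) (hA1 : ∀ i (x : H), ‖adjoint (C i) x‖ ≤ ‖x‖)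
    (N : ℕ) (x : H) : ‖TopN C N x‖ ≤ 4 * ‖x‖ := by
  have hcard : (Finset.Icc (-(N : ℤ)) (N : ℤ)).card = 2 * N + 1 := by
    rw [Int.card_Icc]
    omega
  have hnorm : ‖((2 * (N : ℂ) + 1))⁻¹‖ = ((2 * N + 1 : ℝ))⁻¹ := by
    rw [norm_inv]
    congr 1
    have : (2 * (N : ℂ) + 1) = ((2 * N + 1 : ℝ) : ℂ) := by push_cast; ring
    rw [this, Complex.norm_real]
    rw [Real.norm_eq_abs, abs_of_pos]
    positivity
  have hsum : ‖(∑ i ∈ Finset.Icc (-(N : ℤ)) (N : ℤ), (Xop C i) ^ 2) x‖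
      ≤ (2 * N + 1 : ℝ) * (4 * ‖x‖) := by
    rw [ContinuousLinearMap.sum_apply]
    calc ‖∑ i ∈ Finset.Icc (-(N : ℤ)) (N : ℤ), ((Xop C i) ^ 2) x‖
        ≤ ∑ i ∈ Finset.Icc (-(N : ℤ)) (N : ℤ), ‖((Xop C i) ^ 2) x‖ := norm_sum_le _ _
    _ ≤ ∑ i ∈ Finset.Icc (-(N : ℤ)) (N : ℤ), (4 * ‖x‖) :=
        Finset.sum_le_sum fun i _ => norm_X_sq_le C hC1 hA1 i x
    _ = (2 * N + 1 : ℝ) * (4 * ‖x‖) := by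
        rw [Finset.sum_const, hcard, nsmul_eq_mul]
        push_cast
        ring
  rw [TopN, ContinuousLinearMap.smul_apply, norm_smul, hnorm]
  have hpos : (0 : ℝ) < 2 * N + 1 := by positivity
  calc ((2 * N + 1 : ℝ))⁻¹ * ‖(∑ i ∈ Finset.Icc (-(N : ℤ)) (N : ℤ), (Xop C i) ^ 2) x‖
      ≤ ((2 * N + 1 : ℝ))⁻¹ * ((2 * N + 1 : ℝ) * (4 * ‖x‖)) := by
        apply mul_le_mul_of_nonneg_left hsum
        positivity
  _ = 4 * ‖x‖ := by field_simp

theorem key_tendsto (c : ℝ) (v : ℕ → H)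
    (hv : ∀ᶠ N : ℕ in atTop, ‖v N‖ ≤ c + Real.sqrt (2 * N + 1)) :
    Tendsto (fun N : ℕ => ((2 * (N : ℂ) + 1))⁻¹ • v N) atTop (nhds 0) := by
  have h2 : Tendsto (fun N : ℕ => (2 * (N : ℝ) + 1)) atTop atTop := by
    apply tendsto_atTop_add_const_right
    exact (tendsto_natCast_atTop_atTop (R := ℝ)).const_mul_atTop two_pos
  have hg1 : Tendsto (fun N : ℕ => c / (2 * (N : ℝ) + 1)) atTop (nhds 0) :=
    Tendsto.div_atTop tendsto_const_nhds h2
  have hsq : Tendsto (fun N : ℕ => Real.sqrt (2 * (N : ℝ) + 1)) atTop atTop := by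
    have hr : Tendsto (fun x : ℝ => x ^ (1/2 : ℝ)) atTop atTop :=
      tendsto_rpow_atTop (by norm_num)
    have hcomp := hr.comp h2
    apply hcomp.congr
    intro N
    simp only [Function.comp_apply]
    rw [Real.sqrt_eq_rpow]
  have hg2 : Tendsto (fun N : ℕ => (Real.sqrt (2 * (N : ℝ) + 1))⁻¹) atTop (nhds 0) :=
    hsq.inv_tendsto_atTop
  have hg : Tendsto (fun N : ℕ => c / (2 * (N : ℝ) + 1) + (Real.sqrt (2 * (N : ℝ) + 1))⁻¹)
      atTop (nhds 0) := by
    simpa using hg1.add hg2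
  rw [tendsto_zero_iff_norm_tendsto_zero]
  apply squeeze_zero' (Eventually.of_forall fun N => norm_nonneg _) ?_ hg
  filter_upwards [hv] with N hN
  have hpos : (0 : ℝ) < 2 * (N : ℝ) + 1 := by positivity
  have hnorm : ‖((2 * (N : ℂ) + 1))⁻¹‖ = ((2 * (N : ℝ) + 1))⁻¹ := by
    rw [norm_inv]
    congr 1
    have hcast : (2 * (N : ℂ) + 1) = ((2 * (N : ℝ) + 1 : ℝ) : ℂ) := by push_cast; ring
    rw [hcast, Complex.norm_real, Real.norm_eq_abs, abs_of_pos hpos]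
  rw [norm_smul, hnorm]
  have hsqpos : (0 : ℝ) < Real.sqrt (2 * (N : ℝ) + 1) := Real.sqrt_pos.mpr hpos
  calc ((2 * (N : ℝ) + 1))⁻¹ * ‖v N‖ ≤ ((2 * (N : ℝ) + 1))⁻¹ * (c + Real.sqrt (2 * (N : ℝ) + 1)) := by
        apply mul_le_mul_of_nonneg_left hN
        positivity
  _ = c / (2 * (N : ℝ) + 1) + (Real.sqrt (2 * (N : ℝ) + 1))⁻¹ := by
        rw [mul_add]
        congr 1
        · rw [div_eq_inv_mul]
        · rw [inv_mul_eq_div, Real.sqrt_div_self', one_div]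

end WMAux

namespace WMAux
set_option linter.unusedSectionVars false
variable {H : Type} [NormedAddCommGroup H] [InnerProductSpace ℂ H] [CompleteSpace H]
variable (b : HilbertBasis WMIdx ℂ H) (C : ℤ → H →L[ℂ] H)
variable (hC : ∀ i l (h : WMIdx.ok i l), C i (b l) = b (WMIdx.cons i l h))
variable (hC0 : ∀ i l, ¬ WMIdx.ok i l → C i (b l) = 0)
include hC hC0

theorem sum_sq_vac (N : ℕ) :
    ∑ i ∈ Finset.Icc (-(N : ℤ)) (N : ℤ), ((Xop C i) ^ 2) (b WMIdx.vac)
      = (2 * N + 1) • b WMIdx.vac + ∑ i ∈ Finset.Icc (-(N : ℤ)) (N : ℤ), b (idx2 i) := by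
  have hcard : (Finset.Icc (-(N : ℤ)) (N : ℤ)).card = 2 * N + 1 := by
    rw [Int.card_Icc]; omega
  rw [Finset.sum_congr rfl fun i _ => sq_vac b C hC hC0 i, Finset.sum_add_distrib,
    Finset.sum_const, hcard]

theorem sum_sq_cons (j : ℤ) (t : List ℤ) (h : List.Chain' (· ≥ ·) (j :: t))
    (N : ℕ) (hN : j.natAbs ≤ N) :
    ∑ i ∈ Finset.Icc (-(N : ℤ)) (N : ℤ), ((Xop C i) ^ 2) (b ⟨j :: t, h⟩)
      = (Finset.Icc j (N : ℤ)).card • b ⟨j :: t, h⟩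
        + ∑ i ∈ Finset.Icc j (N : ℤ), b (dd j t h i)
        + (ContinuousLinearMap.adjoint (C j) (b ⟨t, h.tail⟩) + b ⟨j :: t, h⟩) := by
  classical
  have hjN : j ∈ Finset.Icc (-(N : ℤ)) (N : ℤ)  := by
    rw [Finset.mem_Icc]; omega
  have step : ∀ i ∈ Finset.Icc (-(N : ℤ)) (N : ℤ), ((Xop C i) ^ 2) (b ⟨j :: t, h⟩)
      = (if j ≤ i then b ⟨j :: t, h⟩ + b (dd j t h i) else 0)
        + (if i = j then ContinuousLinearMap.adjoint (C j) (b ⟨t, h.tail⟩) + b ⟨j :: t, h⟩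
           else 0) := by
    intro i _
    rcases lt_trichotomy i j with hij | rfl | hij
    · rw [sq_lt b C hC hC0 i j t h hij, if_neg (by omega), if_neg (by omega), add_zero]
    · rw [sq_eq b C hC hC0 i t h, if_pos le_rfl, if_pos rfl]
    · rw [sq_gt b C hC hC0 i j t h hij, if_pos hij.le, if_neg (by omega), add_zero]
  rw [Finset.sum_congr rfl step, Finset.sum_add_distrib]
  congr 1
  · have hfil : (Finset.Icc (-(N : ℤ)) (N : ℤ)).filter (fun i => j ≤ i) = Finset.Icc j (N : ℤ) := by
      ext k
      simp only [Finset.mem_filter, Finset.mem_Icc]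
      omega
    rw [← Finset.sum_filter, hfil, Finset.sum_add_distrib, Finset.sum_const]
  · rw [Finset.sum_ite_eq' _ j _, if_pos hjN]

theorem tendsto_vac :
    Tendsto (fun N : ℕ => TopN C N (b WMIdx.vac)) atTop (nhds (b WMIdx.vac)) := by
  have heq : ∀ N : ℕ, TopN C N (b WMIdx.vac)
      = b WMIdx.vac + ((2 * (N : ℂ) + 1))⁻¹ • ∑ i ∈ Finset.Icc (-(N : ℤ)) (N : ℤ), b (idx2 i) := by
    intro N
    have hne : (2 * (N : ℂ) + 1) ≠ 0 := by
      have hc : (2 * (N : ℂ) + 1) = ((2 * N + 1 : ℕ) : ℂ) := by push_cast; ring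
      rw [hc]
      exact_mod_cast Nat.succ_ne_zero (2 * N)
    rw [TopN, ContinuousLinearMap.smul_apply, ContinuousLinearMap.sum_apply,
      sum_sq_vac b C hC hC0 N, smul_add]
    congr 1
    rw [← Nat.cast_smul_eq_nsmul ℂ, smul_smul,
      show ((2 * N + 1 : ℕ) : ℂ) = 2 * (N : ℂ) + 1 by push_cast; ring,
      inv_mul_cancel₀ hne, one_smul]
  have hzero : Tendsto (fun N : ℕ =>
      ((2 * (N : ℂ) + 1))⁻¹ • ∑ i ∈ Finset.Icc (-(N : ℤ)) (N : ℤ), b (idx2 i))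
      atTop (nhds 0) := by
    apply key_tendsto 0 _
    apply Eventually.of_forall
    intro N
    have hinj : Set.InjOn (fun i : ℤ => idx2 i) (Finset.Icc (-(N : ℤ)) (N : ℤ)) := by
      intro x _ y _ hxy
      have := congrArg (fun z : WMIdx => z.1) hxy
      simpa [idx2] using this
    rw [norm_sum_basis b _ _ hinj, Int.card_Icc, zero_add]
    apply Real.sqrt_le_sqrt
    have : ((N:ℤ) + 1 - -(N:ℤ)).toNat = 2 * N + 1 := by omega
    rw [this]
    push_cast
    linarith
  have := (tendsto_const_nhds (x := b WMIdx.vac) (f := atTop (α := ℕ))).add hzero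
  rw [add_zero] at this
  exact this.congr fun N => (heq N).symm

theorem tendsto_cons (j : ℤ) (t : List ℤ) (h : List.Chain' (· ≥ ·) (j :: t)) :
    Tendsto (fun N : ℕ => TopN C N (b ⟨j :: t, h⟩)) atTop
      (nhds ((1 / 2 : ℂ) • b ⟨j :: t, h⟩)) := by
  set l : WMIdx := ⟨j :: t, h⟩ with hl
  set v : ℕ → H := fun N =>
    (((Finset.Icc j (N : ℤ)).card : ℂ) + 1 - (2 * (N : ℂ) + 1) / 2) • b l
      + (∑ i ∈ Finset.Icc j (N : ℤ), b (dd j t h i)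
        + ContinuousLinearMap.adjoint (C j) (b ⟨t, h.tail⟩)) with hv
  have heq : ∀ᶠ N : ℕ in atTop, TopN C N (b l)
      = (1 / 2 : ℂ) • b l + ((2 * (N : ℂ) + 1))⁻¹ • v N := by
    filter_upwards [eventually_ge_atTop j.natAbs] with N hN
    have hne : (2 * (N : ℂ) + 1) ≠ 0 := by
      have hc : (2 * (N : ℂ) + 1) = ((2 * N + 1 : ℕ) : ℂ) := by push_cast; ring
      rw [hc]
      exact_mod_cast Nat.succ_ne_zero (2 * N)
    rw [TopN, ContinuousLinearMap.smul_apply, ContinuousLinearMap.sum_apply,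
      sum_sq_cons b C hC hC0 j t h N hN]
    rw [hv]
    simp only []
    rw [← Nat.cast_smul_eq_nsmul ℂ ((Finset.Icc j (N : ℤ)).card) (b l)]
    match_scalars
    · field_simp
      ring
    · field_simp
    · field_simp
  have hbound : ∀ᶠ N : ℕ in atTop, ‖v N‖ ≤ (4 + |(j : ℝ)|) + Real.sqrt (2 * N + 1) := by
    filter_upwards [eventually_ge_atTop j.natAbs] with N hN
    have hcard : (Finset.Icc j (N : ℤ)).card = ((N : ℤ) - j + 1).toNat := by
      rw [Int.card_Icc]
      omega
    have hsc : ‖(((Finset.Icc j (N : ℤ)).card : ℂ) + 1 - (2 * (N : ℂ) + 1) / 2)‖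
        ≤ 3 + |(j : ℝ)| := by
      have hc2 : (((Finset.Icc j (N : ℤ)).card : ℂ) + 1 - (2 * (N : ℂ) + 1) / 2)
          = (((3 : ℝ) / 2 - (j : ℝ) : ℝ) : ℂ) := by
        rw [hcard]
        have htn : (((N : ℤ) - j + 1).toNat : ℂ) = ((N : ℂ) - (j : ℂ) + 1) := by
          have h1 : (((N : ℤ) - j + 1).toNat : ℤ) = (N : ℤ) - j + 1 := by omega
          calc (((N : ℤ) - j + 1).toNat : ℂ) = ((((N : ℤ) - j + 1).toNat : ℤ) : ℂ) := by norm_cast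
          _ = (((N : ℤ) - j + 1 : ℤ) : ℂ) := by rw [h1]
          _ = (N : ℂ) - (j : ℂ) + 1 := by push_cast; ring
        rw [htn]
        push_cast
        ring
      rw [hc2, Complex.norm_real, Real.norm_eq_abs]
      have h0 : |(3 : ℝ) / 2 - (j : ℝ)| ≤ |(3 : ℝ)/2| + |(j : ℝ)| := by
        rw [sub_eq_add_neg]
        exact (abs_add_le _ _).trans (by rw [abs_neg])
      have h1 : |(3 : ℝ)/2| = 3/2 := by rw [abs_of_pos]; norm_num
      rw [h1] at h0
      linarith
    have hdd : ‖∑ i ∈ Finset.Icc j (N : ℤ), b (dd j t h i)‖ ≤ Real.sqrt (2 * N + 1) := by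
      have hinj : Set.InjOn (fun i : ℤ => dd j t h i) (Finset.Icc j (N : ℤ)) := by
        intro x hx y hy hxy
        rw [Finset.coe_Icc, Set.mem_Icc] at hx hy
        have := congrArg (fun z : WMIdx => z.1) hxy
        simp only [dd_of_le hx.1, dd_of_le hy.1, List.cons.injEq] at this
        exact this.1
      rw [norm_sum_basis b _ _ hinj]
      apply Real.sqrt_le_sqrt
      rw [Int.card_Icc]
      have h2 : (((N : ℤ) + 1 - j).toNat : ℝ) ≤ 2 * N + 1 := by
        have : ((N : ℤ) + 1 - j).toNat ≤ 2 * N + 1 := by omega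
        exact_mod_cast this
      exact h2
    have hA1 : ‖ContinuousLinearMap.adjoint (C j) (b ⟨t, h.tail⟩)‖ ≤ 1 := by
      have := normA_le b C hC hC0 j (b ⟨t, h.tail⟩)
      rwa [b.orthonormal.1 ⟨t, h.tail⟩] at this
    have hb1 : ‖b l‖ = 1 := b.orthonormal.1 l
    have hvN : v N = (((Finset.Icc j (N : ℤ)).card : ℂ) + 1 - (2 * (N : ℂ) + 1) / 2) • b l
        + (∑ i ∈ Finset.Icc j (N : ℤ), b (dd j t h i)
          + ContinuousLinearMap.adjoint (C j) (b ⟨t, h.tail⟩)) := rfl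
    rw [hvN]
    calc ‖(((Finset.Icc j (N : ℤ)).card : ℂ) + 1 - (2 * (N : ℂ) + 1) / 2) • b l
        + (∑ i ∈ Finset.Icc j (N : ℤ), b (dd j t h i)
          + ContinuousLinearMap.adjoint (C j) (b ⟨t, h.tail⟩))‖
        ≤ ‖(((Finset.Icc j (N : ℤ)).card : ℂ) + 1 - (2 * (N : ℂ) + 1) / 2) • b l‖
          + (‖∑ i ∈ Finset.Icc j (N : ℤ), b (dd j t h i)‖
            + ‖ContinuousLinearMap.adjoint (C j) (b ⟨t, h.tail⟩)‖) :=
          (norm_add_le _ _).trans (by gcongr; exact norm_add_le _ _)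
    _ ≤ (3 + |(j : ℝ)|) + (Real.sqrt (2 * N + 1) + 1) := by
          rw [norm_smul, hb1, mul_one]
          gcongr
    _ = (4 + |(j : ℝ)|) + Real.sqrt (2 * N + 1) := by ring
  have hzero : Tendsto (fun N : ℕ => ((2 * (N : ℂ) + 1))⁻¹ • v N) atTop (nhds 0) :=
    key_tendsto (4 + |(j : ℝ)|) v hbound
  have hmain : Tendsto (fun N : ℕ => (1 / 2 : ℂ) • b l + ((2 * (N : ℂ) + 1))⁻¹ • v N)
      atTop (nhds ((1 / 2 : ℂ) • b l)) := by
    have := (tendsto_const_nhds (x := (1 / 2 : ℂ) • b l) (f := atTop (α := ℕ))).add hzero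
    rwa [add_zero] at this
  exact hmain.congr' (by filter_upwards [heq] with N hN; rw [hN])

end WMAux

noncomputable def Lop {H : Type} [NormedAddCommGroup H] [InnerProductSpace ℂ H] [CompleteSpace H]
    (b : HilbertBasis WMIdx ℂ H) : H →L[ℂ] H :=
  (innerSL ℂ (b WMIdx.vac)).smulRight (b WMIdx.vac)
    + (1 / 2 : ℂ) • (1 - (innerSL ℂ (b WMIdx.vac)).smulRight (b WMIdx.vac))

namespace WMAux
set_option linter.unusedSectionVars false
variable {H : Type} [NormedAddCommGroup H] [InnerProductSpace ℂ H] [CompleteSpace H]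
variable (b : HilbertBasis WMIdx ℂ H) (C : ℤ → H →L[ℂ] H)
variable (hC : ∀ i l (h : WMIdx.ok i l), C i (b l) = b (WMIdx.cons i l h))
variable (hC0 : ∀ i l, ¬ WMIdx.ok i l → C i (b l) = 0)

theorem Lop_apply (x : H) :
    Lop b x = ⟪b WMIdx.vac, x⟫ • b WMIdx.vac
      + (1 / 2 : ℂ) • (x - ⟪b WMIdx.vac, x⟫ • b WMIdx.vac) := by
  simp [Lop, ContinuousLinearMap.smulRight_apply, ContinuousLinearMap.sub_apply,
    ContinuousLinearMap.add_apply, ContinuousLinearMap.smul_apply, ContinuousLinearMap.one_apply]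

theorem norm_P_le (x : H) : ‖(⟪b WMIdx.vac, x⟫ : ℂ) • b WMIdx.vac‖ ≤ ‖x‖ := by
  have hb1 : ‖b WMIdx.vac‖ = 1 := b.orthonormal.1 WMIdx.vac
  rw [norm_smul, hb1, mul_one]
  calc ‖(⟪b WMIdx.vac, x⟫ : ℂ)‖ ≤ ‖b WMIdx.vac‖ * ‖x‖ := norm_inner_le_norm _ _
  _ = ‖x‖ := by rw [hb1, one_mul]

theorem norm_Lop_le (x : H) : ‖Lop b x‖ ≤ 2 * ‖x‖ := by
  rw [Lop_apply]
  have h1 := norm_P_le b x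
  have h2 : ‖(1 / 2 : ℂ) • (x - (⟪b WMIdx.vac, x⟫ : ℂ) • b WMIdx.vac)‖
      ≤ (1 / 2 : ℝ) * (‖x‖ + ‖x‖) := by
    rw [norm_smul]
    have hh : ‖(1 / 2 : ℂ)‖ = (1 / 2 : ℝ) := by simp
    rw [hh]
    have h3 : ‖x - (⟪b WMIdx.vac, x⟫ : ℂ) • b WMIdx.vac‖ ≤ ‖x‖ + ‖x‖ :=
      (norm_sub_le _ _).trans (by linarith)
    linarith
  refine (norm_add_le _ _).trans ?_
  linarith

theorem Lop_vac : Lop b (b WMIdx.vac) = b WMIdx.vac := by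
  classical
  rw [Lop_apply, hb_inner, if_pos rfl, one_smul, sub_self, smul_zero, add_zero]

theorem Lop_cons (j : ℤ) (t : List ℤ) (h : List.Chain' (· ≥ ·) (j :: t)) :
    Lop b (b ⟨j :: t, h⟩) = (1 / 2 : ℂ) • b ⟨j :: t, h⟩ := by
  classical
  rw [Lop_apply, hb_inner b WMIdx.vac ⟨j :: t, h⟩, if_neg, zero_smul, zero_add, sub_zero]
  intro hcon
  have := congrArg (fun z : WMIdx => z.1) hcon
  simp [WMIdx.vac] at this

include hC hC0

theorem tendsto_basis (l : WMIdx) :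
    Tendsto (fun N : ℕ => TopN C N (b l)) atTop (nhds (Lop b (b l))) := by
  obtain ⟨list, hch⟩ := l
  cases list with
  | nil =>
    have hv : (⟨[], hch⟩ : WMIdx) = WMIdx.vac := Subtype.ext rfl
    rw [hv, Lop_vac]
    exact tendsto_vac b C hC hC0
  | cons j t =>
    rw [Lop_cons]
    exact tendsto_cons b C hC hC0 j t hch

theorem tendsto_span (y : H) (hy : y ∈ Submodule.span ℂ (Set.range b)) :
    Tendsto (fun N : ℕ => TopN C N y) atTop (nhds (Lop b y)) := by
  induction hy using Submodule.span_induction with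
  | mem z hz =>
    obtain ⟨l, rfl⟩ := hz
    exact tendsto_basis b C hC hC0 l
  | zero => simpa using tendsto_const_nhds
  | add z w _ _ hz hw =>
    have := hz.add hw
    simpa [map_add] using this
  | smul c z _ hz =>
    have := hz.const_smul c
    simpa [map_smul] using this

theorem tendsto_all (x : H) :
    Tendsto (fun N : ℕ => TopN C N x) atTop (nhds (Lop b x)) := by
  have hC1 : ∀ i (y : H), ‖C i y‖ ≤ ‖y‖ := fun i y => (normC_le b C hC hC0 i y).1
  have hA1 : ∀ i (y : H), ‖adjoint (C i) y‖ ≤ ‖y‖ := fun i y => normA_le b C hC hC0 i y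
  rw [Metric.tendsto_atTop]
  intro ε hε
  have hdense := dense_span' b C hC hC0
  obtain ⟨y, hy, hxy⟩ : ∃ y ∈ Submodule.span ℂ (Set.range b), dist x y < ε / 14 := by
    have := Metric.mem_closure_iff.mp (hdense x) (ε / 14) (by positivity)
    obtain ⟨y, hy, hd⟩ := this
    exact ⟨y, hy, hd⟩
  have hyt := tendsto_span b C hC hC0 y hy
  rw [Metric.tendsto_atTop] at hyt
  obtain ⟨N₀, hN₀⟩ := hyt (ε / 2) (by positivity)
  refine ⟨N₀, fun n hn => ?_⟩
  have h1 : dist (TopN C n x) (TopN C n y) ≤ 4 * ‖x - y‖ := by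
    rw [dist_eq_norm, ← map_sub]
    exact norm_TopN_le C hC1 hA1 n (x - y)
  have h2 : dist (Lop b y) (Lop b x) ≤ 2 * ‖y - x‖ := by
    rw [dist_eq_norm, ← map_sub]
    exact norm_Lop_le b (y - x)
  have hxy' : ‖x - y‖ < ε / 14 := by rwa [← dist_eq_norm]
  have hyx' : ‖y - x‖ < ε / 14 := by rwa [norm_sub_rev]
  have hmid := hN₀ n hn
  calc dist (TopN C n x) (Lop b x)
      ≤ dist (TopN C n x) (TopN C n y) + dist (TopN C n y) (Lop b y)
        + dist (Lop b y) (Lop b x) := dist_triangle4 _ _ _ _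
  _ < ε := by linarith

end WMAux


/-- with `X_i = A_i + A_i†`, the averages `(1/(2N+1)) Σ_{i=-N}^{N} X_i²`
converge strongly to `P_Ω + (1/2)(I − P_Ω)`. -/
theorem wm_position_square_averages_strong_limit {H : Type} [NormedAddCommGroup H] [InnerProductSpace ℂ H] [CompleteSpace H]
    (b : HilbertBasis WMIdx ℂ H) (C : ℤ → H →L[ℂ] H)
    (hC : ∀ i l (h : WMIdx.ok i l), C i (b l) = b (WMIdx.cons i l h))
    (hC0 : ∀ i l, ¬ WMIdx.ok i l → C i (b l) = 0)
    (PΩ : H →L[ℂ] H) (hPΩ : PΩ = (innerSL ℂ (b WMIdx.vac)).smulRight (b WMIdx.vac)) :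
    ∀ x : H, Filter.Tendsto
      (fun N : ℕ => ((2 * N + 1 : ℂ))⁻¹ • ∑ i ∈ Finset.Icc (-(N : ℤ)) (N : ℤ),
        ((ContinuousLinearMap.adjoint (C i) + C i) ^ 2) x)
      Filter.atTop (nhds (PΩ x + (1 / 2 : ℂ) • (x - PΩ x))) := by
  intro x
  have h := WMAux.tendsto_all b C hC hC0 x
  have hfun : (fun N : ℕ => ((2 * N + 1 : ℂ))⁻¹ • ∑ i ∈ Finset.Icc (-(N : ℤ)) (N : ℤ),
      ((ContinuousLinearMap.adjoint (C i) + C i) ^ 2) x) = fun N : ℕ => TopN C N x := by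
    funext N
    rw [TopN, ContinuousLinearMap.smul_apply, ContinuousLinearMap.sum_apply]
    rfl
  have hL : Lop b x = PΩ x + (1 / 2 : ℂ) • (x - PΩ x) := by
    rw [hPΩ, WMAux.Lop_apply]
    simp [ContinuousLinearMap.smulRight_apply]
  rw [hfun, ← hL]
  exact h
end
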